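/- arXiv:1312.4064 — 5 statements merged into one kernel-verified Lean document; each statement's English description precedes it below -/
import Mathlib

section
/- Let 0<α<1, let n≥1 and i∈{1,…,n−1} be integers, and let N be an integer with N ≥ n−i−1. Then (1/Γ(i+1−α)) · ∑_{p=N+1}^∞ Γ(p−n+1+α)/(Γ(α−i)·(p−n+i+1)!) = −(1/Γ(i+1−α)) · ∑_{p=0}^{N−n+i+1} Γ(p+α−i)/(Γ(α−i)·p!), i.e. the tail of the series defining the coefficient A(α,i) of the moment expansion of the left Riemann–Liouville derivative equals the negative of a finite partial sum. -/
open Real Filter Finset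

-- α is not an integer
lemma aux_not_int (α : ℝ) (hα : 0 < α) (hα1 : α < 1) (z : ℤ) : α ≠ (z : ℝ) := by
  intro h
  rcases le_or_gt z 0 with hz | hz
  · have : (z:ℝ) ≤ 0 := by exact_mod_cast hz
    linarith
  · have : (1:ℝ) ≤ (z:ℝ) := by exact_mod_cast hz
    linarith

lemma aux_Gamma_ne (α : ℝ) (hα : 0 < α) (hα1 : α < 1) (z : ℤ) : Real.Gamma (α + z) ≠ 0 := by
  apply Real.Gamma_ne_zero
  intro m h
  apply aux_not_int α hα hα1 (-m - z)
  push_cast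
  linarith

-- log-convexity bound
lemma aux_Gamma_le (α : ℝ) (hα : 0 < α) (hα1 : α < 1) (x : ℝ) (hx : 0 < x) :
    Real.Gamma (x + α) ≤ Real.Gamma x * x ^ α := by
  have h1 : (0:ℝ) < x + 1 := by linarith
  have hconv := Real.convexOn_log_Gamma.2 (Set.mem_Ioi.2 hx) (Set.mem_Ioi.2 h1)
    (by linarith : (0:ℝ) ≤ 1 - α) (le_of_lt hα) (by ring)
  have harg : (1 - α) • x + α • (x + 1) = x + α := by simp [smul_eq_mul]; ring
  rw [harg] at hconv
  simp only [Function.comp_apply, smul_eq_mul] at hconv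
  have hgx : 0 < Real.Gamma x := Real.Gamma_pos_of_pos hx
  have hgx1 : 0 < Real.Gamma (x + 1) := Real.Gamma_pos_of_pos h1
  have hgxa : 0 < Real.Gamma (x + α) := Real.Gamma_pos_of_pos (by linarith)
  have h2 : Real.Gamma (x + 1) = x * Real.Gamma x := Real.Gamma_add_one (ne_of_gt hx)
  rw [h2, Real.log_mul (ne_of_gt hx) (ne_of_gt hgx)] at hconv
  have h3 : Real.log (Real.Gamma (x + α)) ≤ Real.log (Real.Gamma x * x ^ α) := by
    rw [Real.log_mul (ne_of_gt hgx) (ne_of_gt (Real.rpow_pos_of_pos hx α)),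
      Real.log_rpow hx]
    linarith
  exact (Real.log_le_log_iff hgxa (by positivity)).1 h3

lemma aux_fac (k : ℕ) : ∀ p, k ≤ p → (p - k).factorial * (p - k + 1)^k ≤ p.factorial := by
  induction k with
  | zero => intro p _; simp
  | succ k ih =>
    intro p hp
    have hk : k ≤ p := Nat.le_of_succ_le hp
    have h1 : p - (k+1) + 1 = p - k := by omega
    calc (p - (k+1)).factorial * (p - (k+1) + 1)^(k+1)
        = ((p - (k+1) + 1) * (p - (k+1)).factorial) * (p - (k+1) + 1)^k := by ring
      _ = (p - k).factorial * (p - (k+1) + 1)^k := by rw [← h1, Nat.factorial_succ]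
      _ ≤ (p - k).factorial * (p - k + 1)^k := by
          exact Nat.mul_le_mul_left _ (Nat.pow_le_pow_left (by omega) k)
      _ ≤ p.factorial := ih p hk

-- closed form for partial sums
lemma aux_closed (α : ℝ) (hα : 0 < α) (hα1 : α < 1) (i : ℕ) :
    ∀ Q : ℕ, ∑ p ∈ range (Q+1), Real.Gamma ((p:ℝ) + (α - i)) / (Real.Gamma (α - i) * p.factorial)
      = Real.Gamma ((Q:ℝ) + 1 + (α - i)) / (Real.Gamma (α - i + 1) * Q.factorial) := by
  have hne : ∀ p : ℕ, (p:ℝ) + (α - i) ≠ 0 := by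
    intro p h
    exact aux_not_int α hα hα1 ((i:ℤ) - p) (by push_cast; linarith)
  have hG : Real.Gamma (α - i) ≠ 0 := by
    have := aux_Gamma_ne α hα hα1 (-(i:ℤ)); push_cast at this
    simpa [sub_eq_add_neg] using this
  have hG1 : Real.Gamma (α - i + 1) ≠ 0 := by
    have := aux_Gamma_ne α hα hα1 (1 - (i:ℤ)); push_cast at this
    convert this using 2; ring
  have hai : α - (i:ℝ) ≠ 0 := by
    intro h; exact aux_not_int α hα hα1 (i:ℤ) (by push_cast; linarith)
  have hstep : Real.Gamma (α - i + 1) = (α - i) * Real.Gamma (α - i) := by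
    exact Real.Gamma_add_one hai
  intro Q
  induction Q with
  | zero =>
    simp only [range_one, sum_singleton, Nat.cast_zero, Nat.factorial_zero, Nat.cast_one,
      zero_add, mul_one]
    rw [show (1:ℝ) + (α - i) = α - i + 1 by ring, div_self hG, div_self hG1]
  | succ Q ihQ =>
    rw [Finset.sum_range_succ, ihQ]
    have hQ : Real.Gamma ((Q:ℝ) + 1 + 1 + (α - i)) = ((Q:ℝ) + 1 + (α - i)) * Real.Gamma ((Q:ℝ) + 1 + (α-i)) := by
      rw [show (Q:ℝ) + 1 + 1 + (α - i) = ((Q:ℝ) + 1 + (α - i)) + 1 by ring]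
      apply Real.Gamma_add_one
      have := hne (Q+1); push_cast at this; convert this using 2
    push_cast
    rw [hQ, Nat.factorial_succ, hstep]
    have hfQ : ((Q.factorial : ℝ)) ≠ 0 := by exact_mod_cast Q.factorial_ne_zero
    field_simp
    push_cast
    ring

lemma aux_hasSum (α : ℝ) (hα : 0 < α) (hα1 : α < 1) (i : ℕ) (hi : 1 ≤ i) (m : ℕ) :
    HasSum (fun q : ℕ => Real.Gamma (((m + q : ℕ) : ℝ) + (α - i)) /
        (Real.Gamma (α - i) * (m + q).factorial))
      (- ∑ p ∈ range m, Real.Gamma ((p:ℝ) + (α - i)) / (Real.Gamma (α - i) * p.factorial)) := by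
  set c : ℕ → ℝ := fun p => Real.Gamma ((p:ℝ) + (α - i)) / (Real.Gamma (α - i) * p.factorial)
    with hcdef
  have hG : Real.Gamma (α - i) ≠ 0 := by
    have := aux_Gamma_ne α hα hα1 (-(i:ℤ)); push_cast at this
    simpa [sub_eq_add_neg] using this
  have hG1 : Real.Gamma (α - i + 1) ≠ 0 := by
    have := aux_Gamma_ne α hα hα1 (1 - (i:ℤ)); push_cast at this
    convert this using 2; ring
  -- the bound on shifted |c|
  have hbound : ∀ q : ℕ, |c (q + (i+1))| ≤ ((q:ℝ)+1) ^ (α - 2) * |Real.Gamma (α - i)|⁻¹ := by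
    intro q
    have hq1 : (0:ℝ) < (q:ℝ) + 1 := by positivity
    have hq1' : (1:ℝ) ≤ (q:ℝ) + 1 := by simp
    have harg : ((q + (i+1) : ℕ) : ℝ) + (α - i) = ((q:ℝ)+1) + α := by push_cast; ring
    have hgpos : 0 < Real.Gamma (((q:ℝ)+1) + α) := Real.Gamma_pos_of_pos (by linarith)
    have h1 : Real.Gamma (((q:ℝ)+1)+α) ≤ (q.factorial : ℝ) * ((q:ℝ)+1) ^ α := by
      have := aux_Gamma_le α hα hα1 ((q:ℝ)+1) hq1
      rwa [Real.Gamma_nat_eq_factorial q] at this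
    have h3 : (q.factorial : ℝ) * ((q:ℝ)+1)^((i:ℕ)+1) ≤ ((q + (i+1)).factorial : ℝ) := by
      have h := aux_fac (i+1) (q + (i+1)) (by omega)
      have h4 : q + (i+1) - (i+1) = q := by omega
      rw [h4] at h
      exact_mod_cast h
    have hfacpos : (0:ℝ) < ((q + (i+1)).factorial : ℝ) := by
      exact_mod_cast Nat.factorial_pos _
    have hqfpos : (0:ℝ) < (q.factorial : ℝ) := by exact_mod_cast Nat.factorial_pos q
    have hmid : Real.Gamma (((q:ℝ)+1)+α) / ((q + (i+1)).factorial : ℝ)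
        ≤ ((q:ℝ)+1) ^ (α - 2) := by
      calc Real.Gamma (((q:ℝ)+1)+α) / ((q + (i+1)).factorial : ℝ)
          ≤ ((q.factorial : ℝ) * ((q:ℝ)+1) ^ α) / ((q.factorial : ℝ) * ((q:ℝ)+1)^((i:ℕ)+1)) := by
            apply div_le_div₀ (by positivity) h1 (by positivity) h3
        _ = ((q:ℝ)+1) ^ α / ((q:ℝ)+1)^((i:ℕ)+1) := by
            rw [mul_div_mul_left _ _ (ne_of_gt hqfpos)]
        _ = ((q:ℝ)+1) ^ (α - ((i:ℝ)+1)) := by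
            rw [← Real.rpow_natCast ((q:ℝ)+1) (i+1), ← Real.rpow_sub hq1]
            push_cast; ring_nf
        _ ≤ ((q:ℝ)+1) ^ (α - 2) := by
            apply Real.rpow_le_rpow_of_exponent_le hq1'
            have : (1:ℝ) ≤ (i:ℝ) := by exact_mod_cast hi
            linarith
    have habs : |c (q + (i+1))| = Real.Gamma (((q:ℝ)+1)+α) / (|Real.Gamma (α - i)| * ((q + (i+1)).factorial : ℝ)) := by
      rw [hcdef]
      simp only [harg]
      rw [abs_div, abs_mul, abs_of_pos hgpos, Nat.abs_cast]
    rw [habs]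
    rw [div_eq_mul_inv, mul_inv, show Real.Gamma (((q:ℝ)+1)+α) * (|Real.Gamma (α - i)|⁻¹ * (((q + (i+1)).factorial : ℝ))⁻¹) = (Real.Gamma (((q:ℝ)+1)+α) * (((q + (i+1)).factorial : ℝ))⁻¹) * |Real.Gamma (α - i)|⁻¹ by ring, ← div_eq_mul_inv]
    apply mul_le_mul_of_nonneg_right hmid (by positivity)
  -- summability of the majorant
  have hmaj : Summable (fun q : ℕ => ((q:ℝ)+1) ^ (α - 2) * |Real.Gamma (α - i)|⁻¹) := by
    have h0 : Summable (fun n : ℕ => (n:ℝ) ^ (α - 2)) := Real.summable_nat_rpow.mpr (by linarith)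
    have h1 := (summable_nat_add_iff 1).2 h0
    exact (h1.mul_right _).congr (fun n => by push_cast; rfl)
  have hsc : Summable c := by
    have habs : Summable (fun q => |c (q + (i+1))|) :=
      Summable.of_nonneg_of_le (fun q => abs_nonneg _) hbound hmaj
    exact (summable_nat_add_iff (i+1)).1 habs.of_abs
  -- limit of the partial sums of c is 0
  have hF : Tendsto (fun Q : ℕ => Real.Gamma ((Q:ℝ) + 1 + (α - i)) / (Real.Gamma (α - i + 1) * Q.factorial)) atTop (nhds 0) := by
    have hmaj2 : Tendsto (fun Q : ℕ => (((Q - i : ℕ):ℝ)+1) ^ (α - 1) * |Real.Gamma (α - i + 1)|⁻¹) atTop (nhds 0) := by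
      have t1 : Tendsto (fun Q : ℕ => ((Q - i : ℕ):ℝ) + 1) atTop atTop :=
        tendsto_atTop_add_const_right _ 1
          (tendsto_natCast_atTop_atTop.comp (tendsto_sub_atTop_nat i))
      have t2 : Tendsto (fun x : ℝ => x ^ (α - 1)) atTop (nhds 0) := by
        have := tendsto_rpow_neg_atTop (y := 1 - α) (by linarith)
        simpa [neg_sub] using this
      have := (t2.comp t1).mul_const (|Real.Gamma (α - i + 1)|⁻¹)
      simpa using this
    apply squeeze_zero_norm' _ hmaj2
    filter_upwards [eventually_ge_atTop i] with Q hQ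
    set r : ℕ := Q - i with hr
    have hQr : (Q:ℝ) = (r:ℝ) + i := by
      rw [hr]; push_cast [Nat.cast_sub hQ]; ring
    have harg : (Q:ℝ) + 1 + (α - i) = ((r:ℝ)+1) + α := by rw [hQr]; ring
    have hr1 : (0:ℝ) < (r:ℝ) + 1 := by positivity
    have hgpos : 0 < Real.Gamma (((r:ℝ)+1) + α) := Real.Gamma_pos_of_pos (by linarith)
    have h1 : Real.Gamma (((r:ℝ)+1)+α) ≤ (r.factorial : ℝ) * ((r:ℝ)+1) ^ α := by
      have := aux_Gamma_le α hα hα1 ((r:ℝ)+1) hr1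
      rwa [Real.Gamma_nat_eq_factorial r] at this
    have h3 : (r.factorial : ℝ) * ((r:ℝ)+1)^(i:ℕ) ≤ (Q.factorial : ℝ) := by
      have h := aux_fac i Q hQ
      have : ((Q - i).factorial * (Q - i + 1)^i : ℕ) = (r.factorial * (r+1)^i : ℕ) := by rw [hr]
      rw [this] at h
      exact_mod_cast h
    have hrfpos : (0:ℝ) < (r.factorial : ℝ) := by exact_mod_cast Nat.factorial_pos r
    have hQfpos : (0:ℝ) < (Q.factorial : ℝ) := by exact_mod_cast Nat.factorial_pos Q
    have hmid : Real.Gamma (((r:ℝ)+1)+α) / (Q.factorial : ℝ) ≤ ((r:ℝ)+1) ^ (α - 1) := by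
      calc Real.Gamma (((r:ℝ)+1)+α) / (Q.factorial : ℝ)
          ≤ ((r.factorial : ℝ) * ((r:ℝ)+1) ^ α) / ((r.factorial : ℝ) * ((r:ℝ)+1)^(i:ℕ)) := by
            apply div_le_div₀ (by positivity) h1 (by positivity) h3
        _ = ((r:ℝ)+1) ^ α / ((r:ℝ)+1)^(i:ℕ) := by
            rw [mul_div_mul_left _ _ (ne_of_gt hrfpos)]
        _ = ((r:ℝ)+1) ^ (α - (i:ℝ)) := by
            rw [← Real.rpow_natCast ((r:ℝ)+1) i, ← Real.rpow_sub hr1]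
        _ ≤ ((r:ℝ)+1) ^ (α - 1) := by
            apply Real.rpow_le_rpow_of_exponent_le (by simp)
            have : (1:ℝ) ≤ (i:ℝ) := by exact_mod_cast hi
            linarith
    rw [Real.norm_eq_abs, harg, abs_div, abs_of_pos hgpos, abs_mul, Nat.abs_cast]
    rw [div_eq_mul_inv, mul_inv, show Real.Gamma (((r:ℝ)+1)+α) * (|Real.Gamma (α - i + 1)|⁻¹ * ((Q.factorial : ℝ))⁻¹) = (Real.Gamma (((r:ℝ)+1)+α) * ((Q.factorial : ℝ))⁻¹) * |Real.Gamma (α - i + 1)|⁻¹ by ring, ← div_eq_mul_inv]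
    apply mul_le_mul_of_nonneg_right hmid (by positivity)
  have hS0 : Tendsto (fun Q : ℕ => ∑ p ∈ range Q, c p) atTop (nhds 0) := by
    apply (tendsto_add_atTop_iff_nat 1).1
    exact hF.congr (fun Q => (aux_closed α hα hα1 i Q).symm)
  -- partial sums of the tail
  have hps : ∀ Q : ℕ, ∑ q ∈ range Q, c (m + q)
      = (∑ p ∈ range (m + Q), c p) - ∑ p ∈ range m, c p := by
    intro Q
    rw [Finset.sum_range_add]
    ring
  have hsf : Summable (fun q : ℕ => c (m + q)) := by
    have := (summable_nat_add_iff m).2 hsc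
    exact this.congr (fun n => by rw [add_comm])
  have hnorm : Summable (fun q : ℕ => ‖c (m + q)‖) := by
    simpa [Real.norm_eq_abs] using hsf.abs
  rw [show (fun q : ℕ => Real.Gamma (((m + q : ℕ) : ℝ) + (α - i)) /
      (Real.Gamma (α - i) * (m + q).factorial)) = fun q : ℕ => c (m + q) by rfl]
  rw [hasSum_iff_tendsto_nat_of_summable_norm hnorm]
  have h5 : Tendsto (fun Q : ℕ => ∑ p ∈ range (m + Q), c p) atTop (nhds 0) := by
    have := hS0.comp (tendsto_add_atTop_nat m)
    exact this.congr (fun Q => by simp [add_comm])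
  have h6 := h5.sub_const (∑ p ∈ range m, c p)
  rw [zero_sub] at h6
  exact h6.congr (fun Q => (hps Q).symm)

/-- Tail identity for the coefficient `A(α,i)` of the moment expansion of the left
Riemann–Liouville derivative: for `0<α<1`, integers `n ≥ 1`, `1 ≤ i ≤ n−1` and
`N ≥ n−i−1`,
`(1/Γ(i+1−α)) ∑_{p=N+1}^∞ Γ(p−n+1+α)/(Γ(α−i)(p−n+i+1)!)
  = −(1/Γ(i+1−α)) ∑_{p=0}^{N−n+i+1} Γ(p+α−i)/(Γ(α−i) p!)`
(the infinite tail is reindexed by `p = N+1+q`, `q ∈ ℕ`). -/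
theorem stmt5 (α : ℝ) (n i N : ℕ) (hα : 0 < α) (hα1 : α < 1)
    (hn : 1 ≤ n) (hi : 1 ≤ i) (hin : i ≤ n - 1) (hN : n ≤ N + i + 1) :
    (1 / Real.Gamma ((i : ℝ) + 1 - α)) *
        ∑' q : ℕ,
          Real.Gamma (((N : ℝ) + 1 + (q : ℝ)) - (n : ℝ) + 1 + α) /
            (Real.Gamma (α - (i : ℝ)) * (Nat.factorial (N + 2 + q + i - n) : ℝ))
      = -(1 / Real.Gamma ((i : ℝ) + 1 - α)) *
          ∑ p ∈ Finset.range (N + i + 2 - n),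
            Real.Gamma ((p : ℝ) + α - (i : ℝ)) /
              (Real.Gamma (α - (i : ℝ)) * (Nat.factorial p : ℝ)) := by
  have hmn : n ≤ N + i + 2 := by omega
  set m : ℕ := N + i + 2 - n with hm
  have hfun : (fun q : ℕ => Real.Gamma (((N : ℝ) + 1 + (q : ℝ)) - (n : ℝ) + 1 + α) /
      (Real.Gamma (α - (i : ℝ)) * (Nat.factorial (N + 2 + q + i - n) : ℝ)))
      = fun q : ℕ => Real.Gamma (((m + q : ℕ) : ℝ) + (α - i)) /
          (Real.Gamma (α - i) * (m + q).factorial) := by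
    funext q
    have h1 : N + 2 + q + i - n = m + q := by omega
    have hcast : ((m : ℕ) : ℝ) = (N : ℝ) + i + 2 - n := by
      rw [hm]; push_cast [Nat.cast_sub hmn]; ring
    have h2 : ((N : ℝ) + 1 + (q : ℝ)) - (n : ℝ) + 1 + α = ((m + q : ℕ) : ℝ) + (α - i) := by
      push_cast [hcast]; ring
    rw [h1, h2]
  rw [hfun, (aux_hasSum α hα hα1 i hi m).tsum_eq]
  have h3 : ∑ p ∈ Finset.range m, Real.Gamma ((p:ℝ) + (α - i)) / (Real.Gamma (α - i) * p.factorial)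
      = ∑ p ∈ Finset.range m,
          Real.Gamma ((p : ℝ) + α - (i : ℝ)) / (Real.Gamma (α - (i : ℝ)) * (Nat.factorial p : ℝ)) := by
    apply Finset.sum_congr rfl
    intro p _
    rw [add_sub_assoc]
  rw [h3]
  ring
end

section
/- Let α>0 be a non-integer real number, let n≥1 be an integer and let x∈C^n([a,b];ℝ). Then for every t∈[a,b], _aI_t^α x(t) = ∑_{i=0}^{n−1} A_i(α)·(t−a)^{α+i}·x^{(i)}(t) + ∑_{p=n}^∞ B(α,p)·(t−a)^{α+n−1−p}·V_p(t), where A_i(α) = (1/Γ(α+i+1))·[1 + ∑_{p=n−i}^∞ Γ(p−α−n+1)/(Γ(−α−i)·(p−n+1+i)!)] for i=0,…,n−1, B(α,p) = Γ(p−α−n+1)/(Γ(α)·Γ(1−α)·(p−n+1)!), and V_p(t) = ∫_a^t (p−n+1)·(τ−a)^{p−n}·x(τ) dτ for p=n,n+1,…, the series being convergent. -/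
/-- Left Riemann–Liouville fractional integral of order `α`:
`_aI_t^α x(t) = (1/Γ(α)) ∫_a^t (t−τ)^{α−1} x(τ) dτ`. -/
noncomputable def rlIntLeft (a α : ℝ) (x : ℝ → ℝ) (t : ℝ) : ℝ :=
  (1 / Real.Gamma α) * ∫ τ in a..t, (t - τ) ^ (α - 1) * x τ

open Real Filter

/-- Log-convexity bound: `Γ(x+θ) ≤ Γ(x)·x^θ` for `x>0`, `θ∈[0,1]`. -/
lemma Gamma_add_le (x θ : ℝ) (hx : 0 < x) (h0 : 0 ≤ θ) (h1 : θ ≤ 1) :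
    Real.Gamma (x + θ) ≤ Real.Gamma x * x ^ θ := by
  have hx1 : (0:ℝ) < x + 1 := by linarith
  have hxθ : 0 < x + θ := by linarith
  have hconv := Real.convexOn_log_Gamma.2 (Set.mem_Ioi.mpr hx) (Set.mem_Ioi.mpr hx1)
    (show (0:ℝ) ≤ 1 - θ by linarith) h0 (by ring)
  simp only [smul_eq_mul, Function.comp_apply] at hconv
  have hcomb : (1 - θ) * x + θ * (x + 1) = x + θ := by ring
  rw [hcomb] at hconv
  have h2 : Real.Gamma (x + θ) ≤ Real.exp ((1-θ) * Real.log (Real.Gamma x)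
      + θ * Real.log (Real.Gamma (x+1))) := by
    calc Real.Gamma (x + θ) = Real.exp (Real.log (Real.Gamma (x+θ))) :=
          (Real.exp_log (Real.Gamma_pos_of_pos hxθ)).symm
    _ ≤ _ := Real.exp_le_exp.mpr hconv
  calc Real.Gamma (x + θ) ≤ _ := h2
    _ = (Real.Gamma x) ^ (1-θ) * (Real.Gamma (x+1)) ^ θ := by
        rw [Real.exp_add, mul_comm (1-θ), mul_comm θ,
          ← Real.rpow_def_of_pos (Real.Gamma_pos_of_pos hx),
          ← Real.rpow_def_of_pos (Real.Gamma_pos_of_pos hx1)]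
    _ = (Real.Gamma x) ^ (1-θ) * ((Real.Gamma x) ^ θ * x ^ θ) := by
        rw [Real.Gamma_add_one hx.ne', Real.mul_rpow hx.le (Real.Gamma_pos_of_pos hx).le,
          mul_comm (x ^ θ)]
    _ = Real.Gamma x * x ^ θ := by
        rw [← mul_assoc, ← Real.rpow_add (Real.Gamma_pos_of_pos hx)]
        norm_num

lemma fact_mul_pow_le (N m : ℕ) (h : m + 1 ≤ N) :
    Nat.factorial (N - m - 1) * (N - m) ^ (m + 1) ≤ Nat.factorial N := by
  induction m with
  | zero =>
    have hN : 0 < N := by omega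
    simp only [Nat.sub_zero, zero_add, pow_one]
    rw [mul_comm]
    exact le_of_eq (Nat.mul_factorial_pred hN.ne')
  | succ m ih =>
    have h' : m + 1 ≤ N := by omega
    calc Nat.factorial (N - (m+1) - 1) * (N - (m+1)) ^ (m + 1 + 1)
        = (Nat.factorial (N - m - 2) * (N - m - 1)) * (N - m - 1) ^ (m+1) := by
          have e1 : N - (m+1) - 1 = N - m - 2 := by omega
          have e2 : N - (m+1) = N - m - 1 := by omega
          rw [e1, e2, pow_succ]; ring
      _ = Nat.factorial (N - m - 1) * (N - m - 1) ^ (m+1) := by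
          have e : N - m - 2 + 1 = N - m - 1 := by omega
          rw [← e, Nat.factorial_succ]; ring_nf
      _ ≤ Nat.factorial (N - m - 1) * (N - m) ^ (m+1) :=
          Nat.mul_le_mul_left _ (Nat.pow_le_pow_left (by omega) _)
      _ ≤ Nat.factorial N := ih h'

/-- Decay bound `Γ(N+1-c)/N! ≤ (N-⌊c⌋)^(-c)`. -/
lemma gamma_div_fact_le (c : ℝ) (hc : 0 < c) (N : ℕ) (hN : Nat.floor c + 1 ≤ N) :
    Real.Gamma ((N:ℝ) + 1 - c) / (Nat.factorial N : ℝ) ≤ ((N - Nat.floor c : ℕ) : ℝ) ^ (-c) := by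
  set m := Nat.floor c with hm_def
  have hm : (m:ℝ) ≤ c := Nat.floor_le hc.le
  have hm2 : c < (m:ℝ) + 1 := Nat.lt_floor_add_one c
  set θ : ℝ := (m:ℝ) + 1 - c with hθ_def
  set xr : ℝ := ((N - m : ℕ) : ℝ) with hxr_def
  have hxcast : xr = (N:ℝ) - m := by
    rw [hxr_def, Nat.cast_sub (by omega)]
  have hxr1 : (1:ℝ) ≤ xr := by
    rw [hxr_def]; exact_mod_cast Nat.one_le_iff_ne_zero.mpr (by omega)
  have hxr0 : (0:ℝ) < xr := lt_of_lt_of_le one_pos hxr1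
  have key : Real.Gamma ((N:ℝ) + 1 - c) ≤ Real.Gamma xr * xr ^ θ := by
    have e : (N:ℝ) + 1 - c = xr + θ := by rw [hxcast, hθ_def]; ring
    rw [e]
    exact Gamma_add_le xr θ hxr0 (by simp only [hθ_def]; linarith) (by simp only [hθ_def]; linarith)
  have hG : Real.Gamma xr = ((N - m - 1).factorial : ℝ) := by
    have e : (N - m : ℕ) = (N - m - 1) + 1 := by omega
    rw [hxr_def, e, Nat.cast_add, Nat.cast_one, Real.Gamma_nat_eq_factorial]
    norm_num
  have hfact : ((N - m - 1).factorial : ℝ) * xr ^ (m + 1 : ℕ) ≤ (N.factorial : ℝ) := by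
    rw [hxr_def]
    exact_mod_cast fact_mul_pow_le N m hN
  have hNpos : (0:ℝ) < (N.factorial : ℝ) := by exact_mod_cast N.factorial_pos
  have hθpos : 0 ≤ xr ^ θ := (Real.rpow_pos_of_pos hxr0 θ).le
  have step1 : Real.Gamma ((N:ℝ) + 1 - c) / (N.factorial : ℝ)
      ≤ ((N - m - 1).factorial : ℝ) * xr ^ θ / (N.factorial : ℝ) := by
    gcongr
    rw [← hG]; exact key
  refine step1.trans ?_
  have e2 : ((N - m : ℕ) : ℝ) ^ (-c) = xr ^ θ * (xr ^ (m + 1 : ℕ))⁻¹ := by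
    rw [← hxr_def, ← Real.rpow_natCast xr (m+1), ← Real.rpow_neg hxr0.le,
      ← Real.rpow_add hxr0]
    congr 1
    push_cast [hθ_def]
    ring
  rw [e2, div_le_iff₀ hNpos]
  have hxpow : (0:ℝ) < xr ^ (m + 1 : ℕ) := pow_pos hxr0 _
  calc ((N - m - 1).factorial : ℝ) * xr ^ θ
      = xr ^ θ * ((N - m - 1).factorial : ℝ) := by ring
    _ ≤ xr ^ θ * ((N.factorial : ℝ) * (xr ^ (m + 1 : ℕ))⁻¹) := by
        apply mul_le_mul_of_nonneg_left ?_ hθpos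
        rw [le_mul_inv_iff₀ hxpow]
        linarith [hfact]
    _ = xr ^ θ * (xr ^ (m + 1 : ℕ))⁻¹ * (N.factorial : ℝ) := by ring

/-- Summability of `|Γ(q+1-c)|/(q+1)!` for `c > 0`. -/
lemma summable_abs_gamma (c : ℝ) (hc : 0 < c) :
    Summable (fun q : ℕ => |Real.Gamma ((q:ℝ) + 1 - c)| / ((q+1).factorial : ℝ)) := by
  set m := Nat.floor (c+1) with hm_def
  have hmajor : Summable (fun q : ℕ => ((q + 1 - m : ℕ) : ℝ) ^ (-(c+1))) := by
    rw [← summable_nat_add_iff m]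
    have e : ∀ q : ℕ, ((q + m + 1 - m : ℕ) : ℝ) ^ (-(c+1)) = ((q + 1 : ℕ) : ℝ) ^ (-(c+1)) := by
      intro q; congr 2; omega
    simp only [e]
    exact (summable_nat_add_iff (f := fun k : ℕ => ((k:ℕ):ℝ) ^ (-(c+1))) 1).mpr
      (Real.summable_nat_rpow.mpr (by linarith))
  apply hmajor.of_norm_bounded_eventually
  rw [Nat.cofinite_eq_atTop, eventually_atTop]
  refine ⟨m, fun q hq => ?_⟩
  have hcm : c < (m:ℝ) := by
    have h := Nat.lt_floor_add_one (c+1)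
    rw [← hm_def] at h
    linarith
  have hqm : (m:ℝ) ≤ (q:ℝ) := Nat.cast_le.mpr hq
  have harg : (0:ℝ) < (q:ℝ) + 1 - c := by linarith
  have hGnn : 0 ≤ Real.Gamma ((q:ℝ) + 1 - c) := (Real.Gamma_pos_of_pos harg).le
  have hfnn : (0:ℝ) ≤ |Real.Gamma ((q:ℝ) + 1 - c)| / ((q+1).factorial : ℝ) :=
    div_nonneg (abs_nonneg _) (by positivity)
  rw [Real.norm_eq_abs, abs_of_nonneg hfnn, abs_of_nonneg hGnn]
  have := gamma_div_fact_le (c+1) (by linarith) (q+1) (by omega)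
  have e : ((q+1:ℕ):ℝ) + 1 - (c+1) = (q:ℝ) + 1 - c := by push_cast; ring
  rw [e] at this
  rw [← hm_def] at this
  exact this

lemma hasSum_range_succ_tendsto {f : ℕ → ℝ} {v : ℝ} (hf : Summable f)
    (h : Tendsto (fun N => ∑ p ∈ Finset.range (N+1), f p) atTop (nhds v)) : HasSum f v := by
  have h1 := hf.hasSum.tendsto_sum_nat
  have h2 : Tendsto (fun N => ∑ p ∈ Finset.range (N+1), f p) atTop (nhds (∑' p, f p)) :=
    h1.comp (tendsto_add_atTop_nat 1)
  exact (tendsto_nhds_unique h h2) ▸ hf.hasSum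

lemma gamma_ne_zero_of_noninteger (γ : ℝ) (h : ∀ k : ℤ, γ ≠ k) : Real.Gamma γ ≠ 0 := by
  apply Real.Gamma_ne_zero
  intro m
  simpa using h (-m)

lemma sum_c (β : ℝ) (hβ : ∀ k : ℤ, β ≠ k) (N : ℕ) :
    ∑ p ∈ Finset.range (N+1), Real.Gamma ((p:ℝ) - β) / (Real.Gamma (-β) * (p.factorial : ℝ))
      = Real.Gamma ((N:ℝ) + 1 - β) / (Real.Gamma (1-β) * (N.factorial : ℝ)) := by
  have hne0 : Real.Gamma (-β) ≠ 0 := gamma_ne_zero_of_noninteger _ (by intro k h; exact hβ (-k) (by push_cast; linarith))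
  have hne1 : Real.Gamma (1-β) ≠ 0 := gamma_ne_zero_of_noninteger _ (by intro k h; exact hβ (1-k) (by push_cast; linarith))
  have hrec : Real.Gamma (1-β) = -β * Real.Gamma (-β) := by
    have := Real.Gamma_add_one (s := -β) (by intro h; exact hβ 0 (by simpa using (neg_eq_zero.mp h)))
    rw [← this]; ring_nf
  induction N with
  | zero =>
    simp only [Finset.range_one, Finset.sum_singleton, Nat.cast_zero, Nat.factorial_zero,
      Nat.cast_one, mul_one, zero_sub, zero_add]
    rw [div_self hne0, div_self hne1]
  | succ N ih =>
    rw [Finset.sum_range_succ, ih]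
    have hNβ : (N:ℝ) + 1 - β ≠ 0 := by
      intro h; exact hβ (N+1) (by push_cast; linarith)
    have hrecG : Real.Gamma (((N:ℕ):ℝ) + 1 + 1 - β) = ((N:ℝ) + 1 - β) * Real.Gamma ((N:ℝ) + 1 - β) := by
      have := Real.Gamma_add_one (s := (N:ℝ) + 1 - β) hNβ
      rw [← this]; ring_nf
    have hc1 : (((N+1:ℕ)):ℝ) - β = (N:ℝ) + 1 - β := by push_cast; ring
    have hc2 : (((N+1:ℕ)):ℝ) + 1 - β = (N:ℝ) + 1 + 1 - β := by push_cast; ring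
    rw [hc1, hc2, hrecG, hrec, Nat.factorial_succ]
    have hfN : ((N.factorial : ℝ)) ≠ 0 := Nat.cast_ne_zero.mpr N.factorial_pos.ne'
    have hβ0 : β ≠ 0 := fun h => hβ 0 (by simpa using h)
    push_cast
    field_simp
    ring

lemma summable_c (β : ℝ) (hβ : 0 < β) :
    Summable (fun p : ℕ => Real.Gamma ((p:ℝ) - β) / (Real.Gamma (-β) * (p.factorial : ℝ))) := by
  rw [← summable_abs_iff]
  rw [← summable_nat_add_iff 1]
  have e : ∀ q : ℕ, |Real.Gamma (((q+1:ℕ):ℝ) - β) / (Real.Gamma (-β) * (((q+1).factorial : ℕ) : ℝ))|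
      = |Real.Gamma (-β)|⁻¹ * (|Real.Gamma ((q:ℝ) + 1 - β)| / (((q+1).factorial : ℕ) : ℝ)) := by
    intro q
    rw [abs_div, abs_mul, Nat.abs_cast]
    rw [div_mul_eq_div_div_swap, div_eq_inv_mul]
    congr 3
    push_cast; ring
  simp only [e]
  exact (summable_abs_gamma β hβ).mul_left _

lemma hasSum_c_zero (β : ℝ) (hβi : ∀ k : ℤ, β ≠ k) (hβ : 0 < β) :
    HasSum (fun p : ℕ => Real.Gamma ((p:ℝ) - β) / (Real.Gamma (-β) * (p.factorial : ℝ))) 0 := by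
  apply hasSum_range_succ_tendsto (summable_c β hβ)
  have e : (fun N : ℕ => ∑ p ∈ Finset.range (N+1),
      Real.Gamma ((p:ℝ) - β) / (Real.Gamma (-β) * (p.factorial : ℝ)))
      = fun N : ℕ => Real.Gamma ((N:ℝ) + 1 - β) / (Real.Gamma (1-β) * (N.factorial : ℝ)) := by
    funext N; exact sum_c β hβi N
  rw [e]
  set m := Nat.floor β with hm_def
  apply squeeze_zero_norm' (a := fun N : ℕ => |Real.Gamma (1-β)|⁻¹ * ((N - m : ℕ) : ℝ) ^ (-β))
  · rw [eventually_atTop]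
    refine ⟨m + 1, fun N hN => ?_⟩
    have harg : (0:ℝ) < (N:ℝ) + 1 - β := by
      have h1 : β < (m:ℝ) + 1 := Nat.lt_floor_add_one β
      have h2 : ((m:ℝ)+1) ≤ (N:ℝ) := by exact_mod_cast hN
      linarith
    rw [Real.norm_eq_abs, abs_div, abs_mul, Nat.abs_cast,
      abs_of_nonneg (Real.Gamma_pos_of_pos harg).le, div_mul_eq_div_div_swap, div_eq_inv_mul]
    apply mul_le_mul_of_nonneg_left ?_ (by positivity)
    exact gamma_div_fact_le β hβ N hN
  · rw [show (0:ℝ) = |Real.Gamma (1-β)|⁻¹ * 0 by ring]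
    apply Tendsto.const_mul
    apply (tendsto_rpow_neg_atTop hβ).comp
    exact tendsto_natCast_atTop_atTop.comp (tendsto_sub_atTop_nat m)

lemma hasSum_shift_neg_one (β : ℝ) (hβi : ∀ k : ℤ, β ≠ k) (hβ : 0 < β) :
    HasSum (fun q : ℕ => Real.Gamma ((q:ℝ) + 1 - β)
      / (Real.Gamma (-β) * (((q+1).factorial : ℕ) : ℝ))) (-1) := by
  have h0 := hasSum_c_zero β hβi hβ
  have hne0 : Real.Gamma (-β) ≠ 0 := gamma_ne_zero_of_noninteger _ (by
    intro k h
    exact hβi (-k) (by push_cast at h ⊢; linarith))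
  have hc0 : Real.Gamma (((0:ℕ):ℝ) - β) / (Real.Gamma (-β) * ((Nat.factorial 0 : ℕ) : ℝ)) = 1 := by
    rw [Nat.cast_zero, zero_sub, Nat.factorial_zero, Nat.cast_one, mul_one, div_self hne0]
  have : HasSum (fun q : ℕ => Real.Gamma (((q+1:ℕ):ℝ) - β)
      / (Real.Gamma (-β) * (((q+1).factorial : ℕ) : ℝ))) (-1) := by
    apply (hasSum_nat_add_iff (f := fun p : ℕ => Real.Gamma ((p:ℝ) - β)
      / (Real.Gamma (-β) * (p.factorial : ℝ))) 1).mpr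
    simp only [Finset.range_one, Finset.sum_singleton]
    rw [hc0]
    simpa using h0
  convert this using 2 with q
  push_cast; ring_nf

/-- Binomial series: `∑ Γ(p-β)/(Γ(-β) p!) r^p = (1-r)^β` for `0 < r < 1`, `β > -1` noninteger. -/
lemma binomial_hasSum (β : ℝ) (hβi : ∀ k : ℤ, β ≠ k) (hβ : -1 < β) {r : ℝ}
    (h0 : 0 < r) (h1 : r < 1) :
    HasSum (fun p : ℕ => Real.Gamma ((p:ℝ) - β) / (Real.Gamma (-β) * (p.factorial : ℝ)) * r ^ p)
      ((1 - r) ^ β) := by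
  have hne0 : Real.Gamma (-β) ≠ 0 := gamma_ne_zero_of_noninteger _ (by
    intro k h; exact hβi (-k) (by push_cast at h ⊢; linarith))
  set φ : ℝ → ℝ := fun y => (1 - y) ^ β with hφ_def
  set g : ℕ → ℝ → ℝ := fun k y =>
    Real.Gamma ((k:ℝ) - β) / Real.Gamma (-β) * (1 - y) ^ (β - (k:ℝ)) with hg_def
  -- Step A: derivatives of g
  have hderiv : ∀ (k : ℕ) (y : ℝ), y < 1 → HasDerivAt (g k) (g (k+1) y) y := by
    intro k y hy
    have h1y : (0:ℝ) < 1 - y := by linarith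
    have houter : HasDerivAt (fun u : ℝ => u ^ (β - (k:ℝ)))
        ((β - (k:ℝ)) * (1 - y) ^ (β - (k:ℝ) - 1)) (1 - y) :=
      Real.hasDerivAt_rpow_const (Or.inl h1y.ne')
    have hinner : HasDerivAt (fun y : ℝ => 1 - y) (-1) y := by
      exact (hasDerivAt_id' y).const_sub (1:ℝ)
    have hcomp := houter.comp y hinner
    have h := hcomp.const_mul (Real.Gamma ((k:ℝ) - β) / Real.Gamma (-β))
    have hkβ : (k:ℝ) - β ≠ 0 := by
      intro h'; exact hβi k (by push_cast; linarith)
    have hGadd : Real.Gamma ((k:ℝ) - β + 1) = ((k:ℝ) - β) * Real.Gamma ((k:ℝ) - β) :=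
      Real.Gamma_add_one hkβ
    have hval : g (k+1) y = Real.Gamma ((k:ℝ) - β) / Real.Gamma (-β)
        * ((β - (k:ℝ)) * (1 - y) ^ (β - (k:ℝ) - 1) * -1) := by
      rw [hg_def]
      simp only []
      push_cast
      rw [show (k:ℝ) + 1 - β = ((k:ℝ) - β) + 1 by ring, hGadd]
      rw [show β - ((k:ℝ) + 1) = β - (k:ℝ) - 1 by ring]
      ring
    rw [hval]
    exact h
  -- Step B: smoothness of φ on Iio 1
  have hsmooth : ∀ (n : ℕ∞), ContDiffOn ℝ n φ (Set.Iio 1) := by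
    intro n y hy
    have h1y : (1:ℝ) - y ≠ 0 := by
      have hy' : y < 1 := hy
      intro h; linarith
    exact ((Real.contDiffAt_rpow_const_of_ne (p := β) h1y).comp y
      ((contDiff_const.sub contDiff_id).contDiffAt)).contDiffWithinAt
  have hsub : Set.Icc (0:ℝ) r ⊆ Set.Iio 1 := fun z hz => lt_of_le_of_lt hz.2 h1
  have hunique : UniqueDiffOn ℝ (Set.Icc (0:ℝ) r) := uniqueDiffOn_Icc h0
  -- Step C: iterated derivatives within Icc 0 r
  have hiter : ∀ (k : ℕ), ∀ y ∈ Set.Icc (0:ℝ) r, iteratedDerivWithin k φ (Set.Icc 0 r) y = g k y := by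
    intro k
    induction k with
    | zero =>
      intro y hy
      rw [iteratedDerivWithin_zero, hg_def, hφ_def]
      simp only [Nat.cast_zero, zero_sub, sub_zero]
      rw [div_self hne0, one_mul]
    | succ k ih =>
      intro y hy
      rw [iteratedDerivWithin_succ]
      rw [derivWithin_congr ih (ih y hy)]
      exact ((hderiv k y (lt_of_le_of_lt hy.2 h1)).hasDerivWithinAt).derivWithin
        (hunique y hy)
  -- uniform Gamma bound
  set m₀ := Nat.floor (β+1) with hm0_def
  have hb : ∀ N : ℕ, m₀ + 1 ≤ N →
      0 < Real.Gamma ((N:ℝ) - β) ∧ Real.Gamma ((N:ℝ) - β) ≤ (N.factorial : ℝ) := by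
    intro N hN
    have hm0 : β + 1 < (m₀:ℝ) + 1 := Nat.lt_floor_add_one (β+1)
    have hNm : ((m₀:ℝ) + 1) ≤ (N:ℝ) := by exact_mod_cast hN
    have harg : (0:ℝ) < (N:ℝ) - β := by linarith
    refine ⟨Real.Gamma_pos_of_pos harg, ?_⟩
    have hd := gamma_div_fact_le (β+1) (by linarith) N hN
    have e : (N:ℝ) + 1 - (β+1) = (N:ℝ) - β := by ring
    rw [e] at hd
    have hle1 : (((N - m₀:ℕ)):ℝ) ^ (-(β+1)) ≤ 1 := by
      apply Real.rpow_le_one_of_one_le_of_nonpos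
      · exact_mod_cast Nat.one_le_iff_ne_zero.mpr (by omega)
      · linarith
    have hNfpos : (0:ℝ) < (N.factorial : ℝ) := by exact_mod_cast N.factorial_pos
    exact (div_le_one hNfpos).mp (hd.trans hle1)
  -- summability
  have hsummable : Summable (fun p : ℕ =>
      Real.Gamma ((p:ℝ) - β) / (Real.Gamma (-β) * (p.factorial : ℝ)) * r ^ p) := by
    apply Summable.of_norm_bounded_eventually (g := fun p : ℕ => |Real.Gamma (-β)|⁻¹ * r ^ p)
      ((summable_geometric_of_lt_one h0.le h1).mul_left _)
    rw [Nat.cofinite_eq_atTop, eventually_atTop]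
    refine ⟨m₀ + 1, fun p hp => ?_⟩
    obtain ⟨hpos, hle⟩ := hb p hp
    have hfpos : (0:ℝ) < (p.factorial : ℝ) := by exact_mod_cast p.factorial_pos
    rw [Real.norm_eq_abs, abs_mul, abs_div, abs_mul, Nat.abs_cast, abs_of_nonneg hpos.le,
      abs_of_nonneg (pow_nonneg h0.le p)]
    apply mul_le_mul_of_nonneg_right ?_ (pow_nonneg h0.le p)
    calc Real.Gamma ((p:ℝ) - β) / (|Real.Gamma (-β)| * (p.factorial : ℝ))
        = |Real.Gamma (-β)|⁻¹ * (Real.Gamma ((p:ℝ) - β) / (p.factorial : ℝ)) := by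
          rw [div_mul_eq_div_div_swap, div_eq_inv_mul]
      _ ≤ |Real.Gamma (-β)|⁻¹ * 1 := by
          apply mul_le_mul_of_nonneg_left ?_ (inv_nonneg.mpr (abs_nonneg _))
          exact (div_le_one hfpos).mpr hle
      _ = |Real.Gamma (-β)|⁻¹ := mul_one _
  -- convergence of partial sums
  apply hasSum_range_succ_tendsto hsummable
  set S : ℕ → ℝ := fun n => ∑ k ∈ Finset.range (n+1),
    Real.Gamma ((k:ℝ) - β) / (Real.Gamma (-β) * (k.factorial : ℝ)) * r ^ k with hS_def
  have hr0 : (0:ℝ) < 1 - r := by linarith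
  set K : ℝ := max 1 ((1-r) ^ (β-1)) with hK_def
  have hK0 : 0 < K := lt_of_lt_of_le one_pos (le_max_left _ _)
  have hrem : ∀ n : ℕ, m₀ ≤ n →
      |(1 - r) ^ β - S n| ≤ (K / |Real.Gamma (-β)|) * (((n:ℝ)+1) * r ^ (n+1)) := by
    intro n hn
    have hdiff : DifferentiableOn ℝ (iteratedDerivWithin n φ (Set.Icc 0 r)) (Set.Ioo 0 r) := by
      intro y hy
      have hyI : y ∈ Set.Icc (0:ℝ) r := Set.Ioo_subset_Icc_self hy
      have hdy := hderiv n y (lt_trans hy.2 h1)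
      exact ((hdy.hasDerivWithinAt).congr
        (fun z hz => hiter n z (Set.Ioo_subset_Icc_self hz)) (hiter n y hyI)).differentiableWithinAt
    obtain ⟨x', hx', heq⟩ := taylor_mean_remainder_cauchy (f := φ) (x₀ := 0) (x := r) (n := n)
      h0.ne (by rw [Set.uIcc_of_le h0.le]; exact (hsmooth n).mono hsub)
      (by rw [Set.uIcc_of_le h0.le, Set.uIoo_of_le h0.le]; exact hdiff)
    rw [Set.uIcc_of_le h0.le] at heq
    rw [Set.uIoo_of_le h0.le] at hx'
    have htay : taylorWithinEval φ n (Set.Icc 0 r) 0 r = S n := by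
      rw [taylor_within_apply, hS_def]
      apply Finset.sum_congr rfl
      intro k _
      rw [hiter k 0 ⟨le_refl _, h0.le⟩, hg_def]
      simp only [smul_eq_mul, sub_zero]
      rw [Real.one_rpow, mul_one]
      rw [div_eq_mul_inv, div_eq_mul_inv, mul_inv]
      ring
    rw [htay, hiter (n+1) x' (Set.Ioo_subset_Icc_self hx')] at heq
    have h1x' : (0:ℝ) < 1 - x' := by have := hx'.2; linarith
    have hrx' : (0:ℝ) < r - x' := by have := hx'.2; linarith
    obtain ⟨hGpos, hGle⟩ := hb (n+1) (by omega)
    have hGcast : ((n+1:ℕ):ℝ) - β = (n:ℝ) + 1 - β := by push_cast; ring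
    -- key pointwise bound
    have hkey : (1 - x') ^ (β - ((n+1:ℕ):ℝ)) * (r - x') ^ n ≤ K * r ^ n := by
      have hsplit : (1 - x') ^ (β - ((n+1:ℕ):ℝ))
          = (1 - x') ^ (β - 1) * ((1 - x') ^ n)⁻¹ := by
        rw [← Real.rpow_natCast (1 - x') n, ← Real.rpow_neg h1x'.le, ← Real.rpow_add h1x']
        congr 1; push_cast; ring
      rw [hsplit]
      have e2 : (1 - x') ^ (β - 1) * ((1 - x') ^ n)⁻¹ * (r - x') ^ n
          = (1 - x') ^ (β - 1) * ((r - x') / (1 - x')) ^ n := by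
        rw [div_pow]; ring
      rw [e2]
      have ha : (1 - x') ^ (β - 1) ≤ K := by
        rcases le_or_gt 1 β with hb1 | hb1
        · refine le_trans ?_ (le_max_left _ _)
          apply Real.rpow_le_one h1x'.le (by have := hx'.1; linarith) (by linarith)
        · refine le_trans ?_ (le_max_right _ _)
          exact Real.rpow_le_rpow_of_nonpos hr0 (by have := hx'.2; linarith) (by linarith)
      have hbn : ((r - x') / (1 - x')) ^ n ≤ r ^ n := by
        apply pow_le_pow_left₀ (le_of_lt (div_pos hrx' h1x'))
        rw [div_le_iff₀ h1x']
        have := hx'.1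
        nlinarith
      calc (1 - x') ^ (β - 1) * ((r - x') / (1 - x')) ^ n
          ≤ K * ((r - x') / (1 - x')) ^ n := by
            apply mul_le_mul_of_nonneg_right ha (pow_nonneg (le_of_lt (div_pos hrx' h1x')) n)
        _ ≤ K * r ^ n := mul_le_mul_of_nonneg_left hbn hK0.le
    -- assemble
    rw [sub_zero] at heq
    have hφr : φ r = (1 - r) ^ β := rfl
    rw [← hφr, heq, hg_def]
    simp only []
    have hfactpos : (0:ℝ) < (n.factorial : ℝ) := by exact_mod_cast n.factorial_pos
    have hGdivfact : Real.Gamma ((↑(n+1):ℝ) - β) / (n.factorial : ℝ) ≤ (n:ℝ) + 1 := by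
      rw [div_le_iff₀ hfactpos]
      calc Real.Gamma ((↑(n+1):ℝ) - β) ≤ ((n+1).factorial : ℝ) := hGle
        _ = ((n:ℝ) + 1) * (n.factorial : ℝ) := by
            rw [Nat.factorial_succ]; push_cast; ring
    have hrpnn : 0 ≤ (1 - x') ^ (β - (↑(n+1):ℝ)) := Real.rpow_nonneg h1x'.le _
    have hpownn : 0 ≤ (r - x') ^ n := pow_nonneg hrx'.le n
    have h3 : 0 ≤ r * |Real.Gamma (-β)|⁻¹ :=
      mul_nonneg h0.le (inv_nonneg.mpr (abs_nonneg _))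
    calc |Real.Gamma ((↑(n+1):ℝ) - β) / Real.Gamma (-β) * (1 - x') ^ (β - (↑(n+1):ℝ))
            * (r - x') ^ n / (n.factorial:ℝ) * r|
        = Real.Gamma ((↑(n+1):ℝ) - β) / (n.factorial:ℝ)
            * ((1 - x') ^ (β - (↑(n+1):ℝ)) * (r - x') ^ n) * (r * |Real.Gamma (-β)|⁻¹) := by
          rw [abs_mul, abs_div, abs_mul, abs_mul, abs_div,
            abs_of_nonneg hGpos.le, abs_of_nonneg hrpnn, abs_of_nonneg hpownn,
            abs_of_nonneg h0.le, Nat.abs_cast]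
          rw [div_eq_mul_inv, div_eq_mul_inv]
          ring
      _ ≤ ((n:ℝ) + 1) * (K * r ^ n) * (r * |Real.Gamma (-β)|⁻¹) := by
          apply mul_le_mul_of_nonneg_right ?_ h3
          exact mul_le_mul hGdivfact hkey (mul_nonneg hrpnn hpownn)
            (by positivity)
      _ = K / |Real.Gamma (-β)| * (((n:ℝ) + 1) * r ^ (n+1)) := by
          rw [div_eq_mul_inv, pow_succ]; ring
  -- conclude
  have hBtend : Tendsto (fun n : ℕ => (K / |Real.Gamma (-β)|) * (((n:ℝ)+1) * r^(n+1)))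
      atTop (nhds 0) := by
    rw [show (0:ℝ) = (K / |Real.Gamma (-β)|) * 0 by ring]
    apply Tendsto.const_mul
    have hsum : Summable (fun k : ℕ => (k:ℝ) * r ^ k) := by
      have := summable_pow_mul_geometric_of_norm_lt_one (R := ℝ) 1
        (by rwa [Real.norm_eq_abs, abs_of_nonneg h0.le])
      simpa using this
    have h := hsum.tendsto_atTop_zero.comp (tendsto_add_atTop_nat 1)
    convert h using 1
    funext n
    simp only [Function.comp_apply]
    push_cast
    ring
  have hFz : Tendsto (fun n => (1-r)^β - S n) atTop (nhds 0) := by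
    apply squeeze_zero_norm' ?_ hBtend
    rw [eventually_atTop]
    exact ⟨m₀, fun n hn => by rw [Real.norm_eq_abs]; exact hrem n hn⟩
  have hfin : Tendsto S atTop (nhds ((1-r)^β)) := by
    have h2 := (tendsto_const_nhds (x := (1-r)^β) (f := atTop (α := ℕ))).sub hFz
    simp only [sub_zero] at h2
    convert h2 using 2 with n
    ring
  exact hfin

/-- Series decomposition of the left Riemann–Liouville fractional integral of a `C^n`
function: for `t ∈ [a,b]`,
`_aI_t^α x(t) = ∑_{i=0}^{n−1} A_i(α)(t−a)^{α+i}x^{(i)}(t)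
  + ∑_{p=n}^∞ B(α,p)(t−a)^{α+n−1−p}V_p(t)`,
with `A_i(α) = (1/Γ(α+i+1))[1 + ∑_{p=n−i}^∞ Γ(p−α−n+1)/(Γ(−α−i)(p−n+1+i)!)]`,
`B(α,p) = Γ(p−α−n+1)/(Γ(α)Γ(1−α)(p−n+1)!)`,
`V_p(t) = ∫_a^t (p−n+1)(τ−a)^{p−n}x(τ) dτ`, the series (reindexed by `p = q + n`,
resp. `p = q + (n−i)`) being convergent. -/
theorem stmt8 (α a b : ℝ) (n : ℕ) (hα : 0 < α) (hα' : ∀ k : ℤ, α ≠ (k : ℝ))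
    (hn : 1 ≤ n) (hab : a < b)
    (x : ℝ → ℝ) (hx : ContDiffOn ℝ n x (Set.Icc a b)) :
    ∀ t ∈ Set.Icc a b,
      (∀ i : ℕ, i < n →
        Summable (fun q : ℕ =>
          Real.Gamma ((q : ℝ) + 1 - (i : ℝ) - α) /
            (Real.Gamma (-α - (i : ℝ)) * (Nat.factorial (q + 1) : ℝ)))) ∧
      HasSum
        (fun q : ℕ =>
          (Real.Gamma ((q : ℝ) + 1 - α) /
              (Real.Gamma α * Real.Gamma (1 - α) * (Nat.factorial (q + 1) : ℝ)))
            * (t - a) ^ (α - 1 - (q : ℝ))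
            * ∫ τ in a..t, ((q : ℝ) + 1) * (τ - a) ^ q * x τ)
        (rlIntLeft a α x t
          - ∑ i ∈ Finset.range n,
              ((1 / Real.Gamma (α + (i : ℝ) + 1)) *
                  (1 + ∑' q : ℕ,
                    Real.Gamma ((q : ℝ) + 1 - (i : ℝ) - α) /
                      (Real.Gamma (-α - (i : ℝ)) * (Nat.factorial (q + 1) : ℝ))))
                * (t - a) ^ (α + (i : ℝ)) * iteratedDeriv i x t) := by
  intro t ht
  -- the shifted coefficient series for each i
  have hβi : ∀ i : ℕ, ∀ k : ℤ, α + (i:ℝ) ≠ (k:ℝ) := by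
    intro i k h
    exact hα' (k - i) (by push_cast; linarith)
  have efun : ∀ i : ℕ, (fun q : ℕ => Real.Gamma ((q:ℝ) + 1 - (i:ℝ) - α) /
        (Real.Gamma (-α - (i:ℝ)) * (Nat.factorial (q+1) : ℝ)))
      = fun q : ℕ => Real.Gamma ((q:ℝ) + 1 - (α + (i:ℝ))) /
        (Real.Gamma (-(α + (i:ℝ))) * (Nat.factorial (q+1) : ℝ)) := by
    intro i
    funext q
    rw [show (q:ℝ) + 1 - (i:ℝ) - α = (q:ℝ) + 1 - (α + (i:ℝ)) by ring,
      show -α - (i:ℝ) = -(α + (i:ℝ)) by ring]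
  have hHS : ∀ i : ℕ, HasSum (fun q : ℕ => Real.Gamma ((q:ℝ) + 1 - (i:ℝ) - α) /
      (Real.Gamma (-α - (i:ℝ)) * (Nat.factorial (q+1) : ℝ))) (-1) := by
    intro i
    rw [efun i]
    exact hasSum_shift_neg_one (α + i) (hβi i) (by positivity)
  refine ⟨fun i _ => (hHS i).summable, ?_⟩
  -- the finite sum vanishes
  have hzero : ∑ i ∈ Finset.range n,
      ((1 / Real.Gamma (α + (i:ℝ) + 1)) *
          (1 + ∑' q : ℕ, Real.Gamma ((q:ℝ) + 1 - (i:ℝ) - α) /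
            (Real.Gamma (-α - (i:ℝ)) * (Nat.factorial (q+1) : ℝ))))
        * (t - a) ^ (α + (i:ℝ)) * iteratedDeriv i x t = 0 := by
    apply Finset.sum_eq_zero
    intro i _
    rw [(hHS i).tsum_eq]
    norm_num
  rw [hzero, sub_zero]
  -- main HasSum
  rcases eq_or_lt_of_le ht.1 with hta | hta
  · -- t = a
    subst hta
    have e0 : (fun q : ℕ =>
        (Real.Gamma ((q:ℝ) + 1 - α) /
            (Real.Gamma α * Real.Gamma (1 - α) * (Nat.factorial (q+1) : ℝ)))
          * (a - a) ^ (α - 1 - (q:ℝ))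
          * ∫ τ in a..a, ((q:ℝ) + 1) * (τ - a) ^ q * x τ) = fun _ => (0:ℝ) := by
      funext q
      rw [intervalIntegral.integral_same, mul_zero]
    rw [e0, rlIntLeft, intervalIntegral.integral_same, mul_zero]
    exact hasSum_zero
  · -- a < t
    have hta0 : (0:ℝ) < t - a := by linarith
    have hGα : Real.Gamma α ≠ 0 := (Real.Gamma_pos_of_pos hα).ne'
    have hG1α : Real.Gamma (1-α) ≠ 0 := gamma_ne_zero_of_noninteger _
      (fun k h => hα' (1-k) (by push_cast at h ⊢; linarith))
    have hβi' : ∀ k : ℤ, α - 1 ≠ (k:ℝ) := fun k h => hα' (k+1) (by push_cast at h ⊢; linarith)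
    have hβ' : (-1:ℝ) < α - 1 := by linarith
    have hxc : ContinuousOn x (Set.Icc a b) := hx.continuousOn
    obtain ⟨M, hM⟩ := isCompact_Icc.exists_bound_of_continuousOn hxc
    have hM0 : 0 ≤ M := le_trans (norm_nonneg (x a)) (hM a (Set.left_mem_Icc.mpr hab.le))
    have hsubI : Set.Icc a t ⊆ Set.Icc a b := Set.Icc_subset_Icc le_rfl ht.2
    set F : ℕ → ℝ → ℝ := fun q τ =>
      Real.Gamma ((q:ℝ) + 1 - α) / (Real.Gamma α * Real.Gamma (1-α) * (q.factorial : ℝ))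
        * (t - a) ^ (α - 1 - (q:ℝ)) * ((τ - a) ^ q * x τ) with hF_def
    have hfs : ∀ q : ℕ, ((q+1).factorial : ℝ) = ((q:ℝ)+1) * (q.factorial : ℝ) := by
      intro q; rw [Nat.factorial_succ]; push_cast; ring
    have hfpos : ∀ q : ℕ, (0:ℝ) < (q.factorial : ℝ) := fun q => by exact_mod_cast q.factorial_pos
    -- each term equals a set integral
    have hterm : ∀ q : ℕ,
        (Real.Gamma ((q:ℝ) + 1 - α) /
          (Real.Gamma α * Real.Gamma (1-α) * (Nat.factorial (q+1) : ℝ)))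
          * (t - a) ^ (α - 1 - (q:ℝ)) * ∫ τ in a..t, ((q:ℝ)+1) * (τ - a)^q * x τ
        = ∫ τ in Set.Ioc a t, F q τ := by
      intro q
      have e1 : (fun τ => ((q:ℝ)+1) * (τ - a)^q * x τ)
          = fun τ => ((q:ℝ)+1) * ((τ - a)^q * x τ) := by funext τ; ring
      have e2 : ∫ τ in Set.Ioc a t, F q τ
          = (Real.Gamma ((q:ℝ) + 1 - α) / (Real.Gamma α * Real.Gamma (1-α) * (q.factorial : ℝ))
            * (t - a) ^ (α - 1 - (q:ℝ))) * ∫ τ in Set.Ioc a t, ((τ - a) ^ q * x τ) := by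
        simp only [hF_def]
        rw [MeasureTheory.integral_const_mul]
      rw [e1, e2, intervalIntegral.integral_const_mul, intervalIntegral.integral_of_le hta.le]
      rw [hfs q]
      field_simp
    -- integrability
    have hcont : ∀ q : ℕ, ContinuousOn (F q) (Set.Icc a t) := by
      intro q
      simp only [hF_def]
      exact continuousOn_const.mul
        ((((continuous_id.sub continuous_const).pow q).continuousOn).mul (hxc.mono hsubI))
    have hFi : ∀ q : ℕ, MeasureTheory.IntegrableOn (F q) (Set.Ioc a t) := by
      intro q
      exact ((hcont q).integrableOn_Icc).mono_set Set.Ioc_subset_Icc_self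
    -- the power integral
    have hJ : ∀ q : ℕ, ∫ τ in Set.Ioc a t, (τ - a)^q = (t-a)^(q+1)/((q:ℝ)+1) := by
      intro q
      rw [← intervalIntegral.integral_of_le hta.le]
      rw [intervalIntegral.integral_comp_sub_right (fun u => u ^ q) a, sub_self, integral_pow]
      rw [zero_pow (Nat.succ_ne_zero q)]
      push_cast
      ring
    -- summability of integral norms
    set c0 : ℝ := |Real.Gamma α * Real.Gamma (1-α)|⁻¹ * ((t-a)^α * M) with hc0_def
    have habs : ∀ q : ℕ, |Real.Gamma ((q:ℝ) + 1 - α)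
          / (Real.Gamma α * Real.Gamma (1-α) * (q.factorial : ℝ))|
        = |Real.Gamma ((q:ℝ) + 1 - α)| / (|Real.Gamma α * Real.Gamma (1-α)| * (q.factorial : ℝ)) := by
      intro q
      rw [abs_div, abs_mul, Nat.abs_cast]
    have hrpow : ∀ q : ℕ, (t-a)^(α-1-(q:ℝ)) * (t-a)^(q+1) = (t-a)^α := by
      intro q
      rw [← Real.rpow_natCast (t-a) (q+1), ← Real.rpow_add hta0]
      congr 1
      push_cast; ring
    have hnorm_sum : Summable (fun q : ℕ => ∫ τ in Set.Ioc a t, ‖F q τ‖) := by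
      apply Summable.of_nonneg_of_le
        (fun q => MeasureTheory.integral_nonneg (fun τ => norm_nonneg _))
        ?_ (((summable_abs_gamma α hα).mul_left c0))
      intro q
      have hbd : ∀ τ ∈ Set.Ioc a t, ‖F q τ‖
          ≤ |Real.Gamma ((q:ℝ) + 1 - α) / (Real.Gamma α * Real.Gamma (1-α) * (q.factorial : ℝ))|
            * (t - a) ^ (α - 1 - (q:ℝ)) * ((τ - a) ^ q * M) := by
        intro τ hτ
        have hτa : 0 ≤ τ - a := by have := hτ.1; linarith
        simp only [hF_def]
        rw [Real.norm_eq_abs, abs_mul, abs_mul, abs_of_nonneg (Real.rpow_nonneg hta0.le _),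
          abs_mul, abs_of_nonneg (pow_nonneg hτa q)]
        apply mul_le_mul_of_nonneg_left ?_ (by positivity)
        apply mul_le_mul_of_nonneg_left ?_ (pow_nonneg hτa q)
        exact hM τ (hsubI ⟨hτ.1.le, hτ.2⟩)
      have hbint : MeasureTheory.IntegrableOn (fun τ =>
          |Real.Gamma ((q:ℝ) + 1 - α) / (Real.Gamma α * Real.Gamma (1-α) * (q.factorial : ℝ))|
            * (t - a) ^ (α - 1 - (q:ℝ)) * ((τ - a) ^ q * M)) (Set.Ioc a t) := by
        apply MeasureTheory.IntegrableOn.mono_set ?_ (Set.Ioc_subset_Icc_self (a := a) (b := t))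
        apply ContinuousOn.integrableOn_Icc
        exact continuousOn_const.mul
          ((((continuous_id.sub continuous_const).pow q).continuousOn).mul continuousOn_const)
      calc ∫ τ in Set.Ioc a t, ‖F q τ‖
          ≤ ∫ τ in Set.Ioc a t,
            |Real.Gamma ((q:ℝ) + 1 - α) / (Real.Gamma α * Real.Gamma (1-α) * (q.factorial : ℝ))|
            * (t - a) ^ (α - 1 - (q:ℝ)) * ((τ - a) ^ q * M) :=
            MeasureTheory.setIntegral_mono_on ((hFi q).norm) hbint measurableSet_Ioc hbd
        _ = |Real.Gamma ((q:ℝ) + 1 - α) / (Real.Gamma α * Real.Gamma (1-α) * (q.factorial : ℝ))|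
            * (t - a) ^ (α - 1 - (q:ℝ)) * (((t-a)^(q+1)/((q:ℝ)+1)) * M) := by
            rw [MeasureTheory.integral_const_mul]
            congr 1
            rw [MeasureTheory.integral_mul_const, hJ q]
        _ = c0 * (|Real.Gamma ((q:ℝ) + 1 - α)| / ((Nat.factorial (q+1) : ℝ))) := by
            rw [habs q, hc0_def, hfs q]
            rw [show |Real.Gamma ((q:ℝ) + 1 - α)| / (|Real.Gamma α * Real.Gamma (1-α)| * (q.factorial : ℝ))
              * (t - a) ^ (α - 1 - (q:ℝ)) * (((t-a)^(q+1)/((q:ℝ)+1)) * M)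
              = |Real.Gamma ((q:ℝ) + 1 - α)| / (|Real.Gamma α * Real.Gamma (1-α)| * (q.factorial : ℝ))
              * ((t - a) ^ (α - 1 - (q:ℝ)) * (t-a)^(q+1)) * (M/((q:ℝ)+1)) by ring, hrpow q]
            have hq1 : ((q:ℝ)+1) ≠ 0 := by positivity
            have habs0 : |Real.Gamma α * Real.Gamma (1-α)| ≠ 0 :=
              abs_ne_zero.mpr (mul_ne_zero hGα hG1α)
            field_simp
      -- main exchange
    have hmain := MeasureTheory.hasSum_integral_of_summable_integral_norm
      (μ := MeasureTheory.volume.restrict (Set.Ioc a t)) (F := F) hFi hnorm_sum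
    -- identify the integral of the tsum
    have hae_ne : ∀ᵐ (τ : ℝ), τ ≠ t := by
      refine MeasureTheory.ae_iff.mpr ?_
      simpa using MeasureTheory.measure_singleton t
    have hptwise : ∀ τ, τ ∈ Set.Ioc a t → τ ≠ t →
        (∑' q, F q τ) = (1 / Real.Gamma α) * ((t - τ) ^ (α-1) * x τ) := by
      intro τ hτ hne
      have hτa : a < τ := hτ.1
      have hτt : τ < t := lt_of_le_of_ne hτ.2 hne
      set rr : ℝ := (τ - a)/(t - a) with hrr_def
      have hrr0 : 0 < rr := div_pos (by linarith) hta0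
      have hrr1 : rr < 1 := by
        rw [hrr_def, div_lt_one hta0]; linarith
      have hbin := binomial_hasSum (α - 1) hβi' hβ' hrr0 hrr1
      have hbin2 := hbin.mul_left ((1 / Real.Gamma α) * ((t-a)^(α-1) * x τ))
      have hfun : (fun p : ℕ => (1 / Real.Gamma α) * ((t-a)^(α-1) * x τ)
            * (Real.Gamma ((p:ℝ) - (α-1)) / (Real.Gamma (-(α-1)) * (p.factorial : ℝ)) * rr ^ p))
          = fun p => F p τ := by
        funext p
        simp only [hF_def]
        rw [show (p:ℝ) - (α - 1) = (p:ℝ) + 1 - α by ring, show -(α-1) = 1 - α by ring]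
        rw [hrr_def, div_pow]
        rw [show (t-a)^(α-1-(p:ℝ)) = (t-a)^(α-1) * ((t-a)^p)⁻¹ by
          rw [← Real.rpow_natCast (t-a) p, ← Real.rpow_neg hta0.le, ← Real.rpow_add hta0]
          congr 1 <;> ring]
        field_simp
      have hval : (1 / Real.Gamma α) * ((t-a)^(α-1) * x τ) * ((1 - rr) ^ (α-1))
          = (1 / Real.Gamma α) * ((t - τ) ^ (α-1) * x τ) := by
        have h1rr : (0:ℝ) ≤ 1 - rr := by linarith
        have : (t-a)^(α-1) * (1 - rr)^(α-1) = (t - τ)^(α-1) := by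
          rw [← Real.mul_rpow hta0.le h1rr]
          congr 1
          rw [hrr_def]
          field_simp
          ring
        calc (1 / Real.Gamma α) * ((t-a)^(α-1) * x τ) * ((1 - rr) ^ (α-1))
            = (1 / Real.Gamma α) * (((t-a)^(α-1) * (1 - rr)^(α-1)) * x τ) := by ring
          _ = _ := by rw [this]
      rw [hfun] at hbin2
      rw [hval] at hbin2
      exact hbin2.tsum_eq
    have hIeq : (∫ τ in Set.Ioc a t, (∑' q, F q τ)) = rlIntLeft a α x t := by
      rw [MeasureTheory.setIntegral_congr_ae measurableSet_Ioc
        (hae_ne.mono (fun τ hne hmem => hptwise τ hmem hne))]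
      rw [rlIntLeft, intervalIntegral.integral_of_le hta.le, ← MeasureTheory.integral_const_mul]
    rw [← hIeq]
    have hfinal : (fun q : ℕ =>
        (Real.Gamma ((q:ℝ) + 1 - α) /
          (Real.Gamma α * Real.Gamma (1-α) * (Nat.factorial (q+1) : ℝ)))
          * (t - a) ^ (α - 1 - (q:ℝ)) * ∫ τ in a..t, ((q:ℝ)+1) * (τ - a)^q * x τ)
        = fun q => ∫ τ in Set.Ioc a t, F q τ := funext hterm
    rw [hfinal]
    exact hmain
end

section
/- Let α>0 be a non-integer real number and let n≥1 and i∈{0,…,n−1} be integers. Then the series ∑_{p=n−i}^∞ Γ(p−α−n+1)/(Γ(−α−i)·(p−n+1+i)!) converges absolutely and its sum equals −1; consequently the coefficient A_i(α) = (1/Γ(α+i+1))·[1 + ∑_{p=n−i}^∞ Γ(p−α−n+1)/(Γ(−α−i)·(p−n+1+i)!)] appearing in the series decomposition of the left Riemann–Liouville fractional integral of a C^n function equals 0. -/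
open Filter Finset Topology

private lemma gammaProdAux (x : ℝ) (hx : ∀ j : ℕ, x + (j : ℝ) ≠ 0) (n : ℕ) :
    Real.Gamma (x + n) = Real.Gamma x * ∏ j ∈ Finset.range n, (x + (j : ℝ)) := by
  induction n with
  | zero => simp
  | succ n ih =>
    rw [Finset.prod_range_succ, ← mul_assoc, ← ih,
      show x + ((n + 1 : ℕ) : ℝ) = (x + n) + 1 by push_cast; ring,
      Real.Gamma_add_one (hx n)]
    ring

/-- For `α>0` non-integer and integers `n ≥ 1`, `0 ≤ i ≤ n−1`, the series
`∑_{p=n−i}^∞ Γ(p−α−n+1)/(Γ(−α−i)(p−n+1+i)!)` (reindexed by `p = q + (n−i)`, `q ∈ ℕ`)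
converges absolutely and its sum equals `−1`; consequently the coefficient
`A_i(α) = (1/Γ(α+i+1))[1 + ∑_{p=n−i}^∞ Γ(p−α−n+1)/(Γ(−α−i)(p−n+1+i)!)]` of the
series decomposition of the left Riemann–Liouville fractional integral equals `0`. -/
theorem stmt10 (α : ℝ) (n i : ℕ) (hα : 0 < α) (hα' : ∀ k : ℤ, α ≠ (k : ℝ))
    (hn : 1 ≤ n) (hi : i ≤ n - 1) :
    Summable (fun q : ℕ =>
      |Real.Gamma ((q : ℝ) + 1 - (i : ℝ) - α) /
        (Real.Gamma (-α - (i : ℝ)) * (Nat.factorial (q + 1) : ℝ))|) ∧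
    HasSum (fun q : ℕ =>
      Real.Gamma ((q : ℝ) + 1 - (i : ℝ) - α) /
        (Real.Gamma (-α - (i : ℝ)) * (Nat.factorial (q + 1) : ℝ))) (-1) ∧
    (1 / Real.Gamma (α + (i : ℝ) + 1)) *
        (1 + ∑' q : ℕ,
          Real.Gamma ((q : ℝ) + 1 - (i : ℝ) - α) /
            (Real.Gamma (-α - (i : ℝ)) * (Nat.factorial (q + 1) : ℝ))) = 0 := by
  set β : ℝ := α + i with hβdef
  set x : ℝ := 1 - β with hxdef
  have hβ0 : 0 < β := by positivity
  have hβint : ∀ k : ℤ, β ≠ (k : ℝ) := by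
    intro k h
    apply hα' (k - i)
    push_cast
    rw [hβdef] at h
    linarith
  have hxj : ∀ j : ℕ, x + (j : ℝ) ≠ 0 := by
    intro j h
    apply hβint (j + 1)
    push_cast
    rw [hxdef] at h
    linarith
  have hβne : β ≠ 0 := by
    intro h; exact hβint 0 (by push_cast; linarith)
  have hG1 : Real.Gamma x ≠ 0 := by
    apply Real.Gamma_ne_zero
    intro m h
    apply hβint (m + 1)
    push_cast
    rw [hxdef] at h
    linarith
  have hGmβ : Real.Gamma (-β) ≠ 0 := by
    apply Real.Gamma_ne_zero
    intro m h
    apply hβint m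
    push_cast
    linarith
  have hrec : Real.Gamma x = -β * Real.Gamma (-β) := by
    rw [hxdef, show (1 : ℝ) - β = -β + 1 by ring, Real.Gamma_add_one (neg_ne_zero.mpr hβne)]
  set s : ℕ → ℝ := fun m => Real.Gamma (x + m) / (Real.Gamma x * (Nat.factorial m : ℝ))
    with hsdef
  -- the terms of the series
  have harg : ∀ q : ℕ, (q : ℝ) + 1 - (i : ℝ) - α = x + q := by
    intro q; rw [hxdef, hβdef]; ring
  have harg2 : -α - (i : ℝ) = -β := by rw [hβdef]; ring
  have hterm : ∀ q : ℕ,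
      Real.Gamma ((q : ℝ) + 1 - (i : ℝ) - α) /
        (Real.Gamma (-α - (i : ℝ)) * (Nat.factorial (q + 1) : ℝ)) = s (q + 1) - s q := by
    intro q
    have hg : Real.Gamma (x + ((q + 1 : ℕ) : ℝ)) = (x + q) * Real.Gamma (x + q) := by
      rw [show x + ((q + 1 : ℕ) : ℝ) = (x + q) + 1 by push_cast; ring,
        Real.Gamma_add_one (hxj q)]
    have hfac : (Nat.factorial (q + 1) : ℝ) = ((q : ℝ) + 1) * (Nat.factorial q : ℝ) := by
      rw [Nat.factorial_succ]; push_cast; ring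
    have hq1 : ((q : ℝ) + 1) ≠ 0 := by positivity
    have hfq : (Nat.factorial q : ℝ) ≠ 0 := by
      exact_mod_cast (Nat.factorial_ne_zero q)
    rw [harg q, harg2]
    simp only [hsdef]
    rw [hg, hrec, hfac]
    field_simp
    ring
  -- the limit of s
  have hkey : ∀ m : ℕ, 1 ≤ m →
      s m = (m : ℝ) ^ (x - 1) * ((m : ℝ) / (x + m)) * (Real.GammaSeq x m)⁻¹ := by
    intro m hm
    have hm0 : (0 : ℝ) < m := by exact_mod_cast hm
    have hprodne : (∏ j ∈ Finset.range m, (x + (j : ℝ))) ≠ 0 :=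
      Finset.prod_ne_zero_iff.mpr fun j _ => hxj j
    have hs1 : s m = (∏ j ∈ Finset.range m, (x + (j : ℝ))) / (Nat.factorial m : ℝ) := by
      simp only [hsdef]
      rw [gammaProdAux x hxj m, mul_div_mul_left _ _ hG1]
    have hinv : (Real.GammaSeq x m)⁻¹ =
        (∏ j ∈ Finset.range m, (x + (j : ℝ))) * (x + m) / ((m : ℝ) ^ x * (Nat.factorial m : ℝ)) := by
      rw [Real.GammaSeq, inv_div, Finset.prod_range_succ]
    have hpow : (m : ℝ) ^ x = (m : ℝ) ^ (x - 1) * (m : ℝ) := by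
      rw [show x = (x - 1) + 1 by ring, Real.rpow_add hm0, Real.rpow_one]
      ring_nf
    have hfm : (Nat.factorial m : ℝ) ≠ 0 := by exact_mod_cast Nat.factorial_ne_zero m
    have hxm : x + (m : ℝ) ≠ 0 := hxj m
    have hrp : (m : ℝ) ^ (x - 1) ≠ 0 := ne_of_gt (Real.rpow_pos_of_pos hm0 _)
    rw [hs1, hinv, hpow]
    field_simp
  have h0 : Tendsto (fun m : ℕ => (m : ℝ) ^ (x - 1)) atTop (𝓝 0) := by
    have hx1 : x - 1 = -β := by rw [hxdef]; ring
    rw [hx1]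
    exact (tendsto_rpow_neg_atTop hβ0).comp tendsto_natCast_atTop_atTop
  have h1 : Tendsto (fun m : ℕ => (m : ℝ) / (x + m)) atTop (𝓝 1) := by
    have ha : Tendsto (fun m : ℕ => x + (m : ℝ)) atTop atTop :=
      tendsto_atTop_add_const_left _ x tendsto_natCast_atTop_atTop
    have hb : Tendsto (fun m : ℕ => (x + (m : ℝ))⁻¹) atTop (𝓝 0) := ha.inv_tendsto_atTop
    have hc : Tendsto (fun m : ℕ => 1 - x * (x + (m : ℝ))⁻¹) atTop (𝓝 (1 - x * 0)) :=
      tendsto_const_nhds.sub (tendsto_const_nhds.mul hb)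
    rw [mul_zero, sub_zero] at hc
    refine hc.congr fun m => ?_
    have hm := hxj m
    field_simp <;> ring
  have h2 : Tendsto (fun m : ℕ => (Real.GammaSeq x m)⁻¹) atTop (𝓝 (Real.Gamma x)⁻¹) :=
    (Real.GammaSeq_tendsto_Gamma x).inv₀ hG1
  have hlim : Tendsto s atTop (𝓝 0) := by
    have h3 := (h0.mul h1).mul h2
    rw [zero_mul, zero_mul] at h3
    refine h3.congr' ?_
    filter_upwards [eventually_ge_atTop 1] with m hm
    exact (hkey m hm).symm
  have hs0 : s 0 = 1 := by
    simp only [hsdef, Nat.cast_zero, add_zero, Nat.factorial_zero, Nat.cast_one, mul_one]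
    exact div_self hG1
  -- partial sums
  have hpartial : ∀ N : ℕ, (∑ q ∈ Finset.range N,
      Real.Gamma ((q : ℝ) + 1 - (i : ℝ) - α) /
        (Real.Gamma (-α - (i : ℝ)) * (Nat.factorial (q + 1) : ℝ))) = s N - 1 := by
    intro N
    rw [Finset.sum_congr rfl fun q _ => hterm q, Finset.sum_range_sub s N, hs0]
  have hps : Tendsto (fun N : ℕ => ∑ q ∈ Finset.range N,
      Real.Gamma ((q : ℝ) + 1 - (i : ℝ) - α) /
        (Real.Gamma (-α - (i : ℝ)) * (Nat.factorial (q + 1) : ℝ))) atTop (𝓝 (-1)) := by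
    have := hlim.sub_const 1
    rw [zero_sub] at this
    exact this.congr fun N => (hpartial N).symm
  -- summability of absolute values
  set q0 : ℕ := ⌈β⌉₊ with hq0def
  set ε : ℝ := if 0 < Real.Gamma (-β) then 1 else -1 with hεdef
  have habs : ∀ q : ℕ, q0 ≤ q →
      |Real.Gamma ((q : ℝ) + 1 - (i : ℝ) - α) /
        (Real.Gamma (-α - (i : ℝ)) * (Nat.factorial (q + 1) : ℝ))| =
      ε * (Real.Gamma ((q : ℝ) + 1 - (i : ℝ) - α) /
        (Real.Gamma (-α - (i : ℝ)) * (Nat.factorial (q + 1) : ℝ))) := by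
    intro q hq
    have hxq : 0 < x + (q : ℝ) := by
      have : β ≤ (q : ℝ) := le_trans (Nat.le_ceil β) (by exact_mod_cast hq)
      rw [hxdef]; linarith
    have hGpos : 0 < Real.Gamma ((q : ℝ) + 1 - (i : ℝ) - α) := by
      rw [harg q]; exact Real.Gamma_pos_of_pos hxq
    have hfpos : (0 : ℝ) < (Nat.factorial (q + 1) : ℝ) := by
      exact_mod_cast Nat.factorial_pos (q + 1)
    rw [harg2, hεdef]
    split_ifs with h
    · rw [one_mul, abs_of_pos (div_pos hGpos (mul_pos h hfpos))]
    · have hneg : Real.Gamma (-β) < 0 := lt_of_le_of_ne (not_lt.mp h) hGmβ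
      rw [abs_of_neg (div_neg_of_pos_of_neg hGpos (mul_neg_of_neg_of_pos hneg hfpos))]
      ring
  have hεabs : |ε| = 1 := by
    rw [hεdef]; split_ifs <;> norm_num
  obtain ⟨C, hC⟩ : ∃ C : ℝ, ∀ m : ℕ, |s m| ≤ C := by
    have : Tendsto (fun m => |s m|) atTop (𝓝 |0|) := hlim.abs
    obtain ⟨C, hC⟩ := this.bddAbove_range
    exact ⟨C, fun m => hC ⟨m, rfl⟩⟩
  have hsummable_abs : Summable (fun q : ℕ =>
      |Real.Gamma ((q : ℝ) + 1 - (i : ℝ) - α) /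
        (Real.Gamma (-α - (i : ℝ)) * (Nat.factorial (q + 1) : ℝ))|) := by
    rw [← summable_nat_add_iff q0]
    apply summable_of_sum_range_le (c := 2 * C) (fun _ => abs_nonneg _)
    intro N
    have hsum_eq : (∑ k ∈ Finset.range N,
        |Real.Gamma (((k + q0 : ℕ) : ℝ) + 1 - (i : ℝ) - α) /
          (Real.Gamma (-α - (i : ℝ)) * (Nat.factorial ((k + q0) + 1) : ℝ))|) =
        ε * (s (N + q0) - s q0) := by
      rw [Finset.sum_congr rfl fun k _ => by
        rw [habs (k + q0) (Nat.le_add_left _ _), hterm (k + q0)]]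
      rw [← Finset.mul_sum]
      congr 1
      have h := Finset.sum_range_sub (fun k => s (k + q0)) N
      simp only [Nat.zero_add] at h
      rw [← h]
      exact Finset.sum_congr rfl fun k _ => by rw [Nat.add_right_comm]
    rw [hsum_eq]
    calc ε * (s (N + q0) - s q0) ≤ |ε * (s (N + q0) - s q0)| := le_abs_self _
      _ = |s (N + q0) - s q0| := by rw [abs_mul, hεabs, one_mul]
      _ ≤ |s (N + q0)| + |s q0| := abs_sub _ _
      _ ≤ C + C := add_le_add (hC _) (hC _)
      _ = 2 * C := by ring
  have hsummable : Summable (fun q : ℕ =>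
      Real.Gamma ((q : ℝ) + 1 - (i : ℝ) - α) /
        (Real.Gamma (-α - (i : ℝ)) * (Nat.factorial (q + 1) : ℝ))) :=
    hsummable_abs.of_abs
  have hhassum : HasSum (fun q : ℕ =>
      Real.Gamma ((q : ℝ) + 1 - (i : ℝ) - α) /
        (Real.Gamma (-α - (i : ℝ)) * (Nat.factorial (q + 1) : ℝ))) (-1) :=
    (hsummable.hasSum_iff_tendsto_nat).mpr hps
  refine ⟨hsummable_abs, hhassum, ?_⟩
  rw [hhassum.tsum_eq]
  norm_num
end

section
/- Let α>0 be a non-integer real number, let n≥1 and i∈{0,…,n−1} be integers, and let N be an integer with N ≥ n. Then (1/Γ(α+i+1)) · ∑_{p=N+1}^∞ Γ(p−α−n+1)/(Γ(−α−i)·(p−n+1+i)!) = −(1/Γ(α+i+1)) · ∑_{p=0}^{N−n+1+i} Γ(p−α−i)/(Γ(−α−i)·p!), i.e. the tail of the series defining the coefficient A_i(α) of the decomposition of the left Riemann–Liouville fractional integral equals the negative of a finite partial sum. -/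
open Real Filter Finset

-- Gamma nonzero at nat minus non-integer
lemma aux_gamma_ne (b : ℝ) (hbk : ∀ k : ℤ, b ≠ (k : ℝ)) (x : ℝ) (hx : ∃ k : ℤ, x = k) :
    Real.Gamma (x - b) ≠ 0 := by
  obtain ⟨k, rfl⟩ := hx
  apply Real.Gamma_ne_zero
  intro m h
  apply hbk (k + m)
  push_cast
  linarith

-- closed form of partial sums
lemma aux_closed_s11 (b : ℝ) (hbk : ∀ k : ℤ, b ≠ (k : ℝ)) (M : ℕ) :
    ∑ p ∈ range (M + 1), Real.Gamma ((p : ℝ) - b) / (Real.Gamma (-b) * p.factorial)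
      = Real.Gamma ((M : ℝ) + 1 - b) / (Real.Gamma (1 - b) * M.factorial) := by
  induction M with
  | zero =>
      have h1 : Real.Gamma (-b) ≠ 0 := by
        have := aux_gamma_ne b hbk 0 ⟨0, by simp⟩; simpa using this
      have h2 : Real.Gamma (1 - b) ≠ 0 := aux_gamma_ne b hbk 1 ⟨1, by simp⟩
      simp [div_self, h1, h2]
  | succ M ih =>
      rw [Finset.sum_range_succ, ih]
      have h0 : Real.Gamma (-b) ≠ 0 := by
        have := aux_gamma_ne b hbk 0 ⟨0, by simp⟩; simpa using this
      have h1 : Real.Gamma (1 - b) ≠ 0 := aux_gamma_ne b hbk 1 ⟨1, by simp⟩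
      have hG1 : Real.Gamma (1 - b) = -b * Real.Gamma (-b) := by
        have := Real.Gamma_add_one (s := -b) (by
          intro h; exact hbk 0 (by simpa using (neg_eq_zero.mp h)))
        simpa [sub_eq_add_neg, add_comm] using this
      have hG2 : Real.Gamma ((M : ℝ) + 1 + 1 - b) = ((M : ℝ) + 1 - b) * Real.Gamma ((M : ℝ) + 1 - b) := by
        have hne : (M : ℝ) + 1 - b ≠ 0 := by
          intro h; exact hbk (M + 1) (by push_cast; linarith)
        have := Real.Gamma_add_one hne
        rw [← this]; ring_nf
      have hfac : ((M + 1).factorial : ℝ) = (M + 1) * M.factorial := by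
        push_cast [Nat.factorial_succ]; ring
      have hfne : (M.factorial : ℝ) ≠ 0 := Nat.cast_ne_zero.mpr M.factorial_ne_zero
      have hfne' : ((M : ℝ) + 1) ≠ 0 := by positivity
      have hb0 : b ≠ 0 := by intro h; exact hbk 0 (by simpa using h)
      push_cast
      rw [hG2, hfac, hG1]
      field_simp
      ring

-- product form
lemma aux_prod (b : ℝ) (hbk : ∀ k : ℤ, b ≠ (k : ℝ)) (M : ℕ) :
    Real.Gamma ((M : ℝ) + 1 - b) / (Real.Gamma (1 - b) * M.factorial)
      = ∏ k ∈ range M, (1 - b / (k + 1)) := by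
  induction M with
  | zero =>
      have h2 : Real.Gamma (1 - b) ≠ 0 := aux_gamma_ne b hbk 1 ⟨1, by simp⟩
      simp [div_self, h2]
  | succ M ih =>
      rw [Finset.prod_range_succ, ← ih]
      have hG2 : Real.Gamma ((M : ℝ) + 1 + 1 - b) = ((M : ℝ) + 1 - b) * Real.Gamma ((M : ℝ) + 1 - b) := by
        have hne : (M : ℝ) + 1 - b ≠ 0 := by
          intro h; exact hbk (M + 1) (by push_cast; linarith)
        have := Real.Gamma_add_one hne
        rw [← this]; ring_nf
      have hfac : ((M + 1).factorial : ℝ) = (M + 1) * M.factorial := by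
        push_cast [Nat.factorial_succ]; ring
      have h2 : Real.Gamma (1 - b) ≠ 0 := aux_gamma_ne b hbk 1 ⟨1, by simp⟩
      have hfne : (M.factorial : ℝ) ≠ 0 := Nat.cast_ne_zero.mpr M.factorial_ne_zero
      have hfne' : ((M : ℝ) + 1) ≠ 0 := by positivity
      push_cast
      rw [hG2, hfac]
      field_simp

-- limit of product
lemma aux_limit (b : ℝ) (hb : 0 < b) :
    Tendsto (fun M => ∏ k ∈ range M, (1 - b / ((k : ℝ) + 1))) atTop (nhds 0) := by
  obtain ⟨K, hK⟩ := exists_nat_gt b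
  rw [tendsto_zero_iff_abs_tendsto_zero]
  have key : ∀ M, K ≤ M → |∏ k ∈ range M, (1 - b / ((k : ℝ) + 1))|
      ≤ |∏ k ∈ range K, (1 - b / ((k : ℝ) + 1))| *
        Real.exp (-(b * (∑ k ∈ range M, 1 / ((k : ℝ) + 1) - ∑ k ∈ range K, 1 / ((k : ℝ) + 1)))) := by
    intro M hM
    rw [← Finset.prod_range_mul_prod_Ico _ hM, abs_mul]
    apply mul_le_mul_of_nonneg_left _ (abs_nonneg _)
    have hnn : ∀ k ∈ Finset.Ico K M, (0 : ℝ) ≤ 1 - b / ((k : ℝ) + 1) := by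
      intro k hk
      have hk' : (K : ℝ) ≤ k := Nat.cast_le.mpr (Finset.mem_Ico.mp hk).1
      have : b / ((k:ℝ)+1) ≤ 1 := by
        rw [div_le_one (by positivity)]
        linarith
      linarith
    calc |∏ k ∈ Finset.Ico K M, (1 - b / ((k : ℝ) + 1))|
        = ∏ k ∈ Finset.Ico K M, (1 - b / ((k : ℝ) + 1)) := by
          rw [abs_of_nonneg (Finset.prod_nonneg hnn)]
      _ ≤ ∏ k ∈ Finset.Ico K M, Real.exp (-(b / ((k : ℝ) + 1))) := by
          apply Finset.prod_le_prod hnn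
          intro k _
          have := Real.add_one_le_exp (-(b / ((k:ℝ)+1)))
          linarith
      _ = Real.exp (-(b * (∑ k ∈ range M, 1 / ((k : ℝ) + 1) - ∑ k ∈ range K, 1 / ((k : ℝ) + 1)))) := by
          rw [← Real.exp_sum]
          congr 1
          rw [← Finset.sum_Ico_eq_sub _ hM, Finset.mul_sum, ← Finset.sum_neg_distrib]
          apply Finset.sum_congr rfl
          intro k _
          field_simp
  have hbound : Tendsto (fun M => |∏ k ∈ range K, (1 - b / ((k : ℝ) + 1))| *
      Real.exp (-(b * (∑ k ∈ range M, 1 / ((k : ℝ) + 1) - ∑ k ∈ range K, 1 / ((k : ℝ) + 1)))))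
      atTop (nhds 0) := by
    rw [show (0:ℝ) = |∏ k ∈ range K, (1 - b / ((k : ℝ) + 1))| * 0 by ring]
    apply Tendsto.const_mul
    apply Real.tendsto_exp_atBot.comp
    apply tendsto_neg_atTop_atBot.comp
    apply Tendsto.const_mul_atTop hb
    apply tendsto_atTop_add_const_right
    exact Real.tendsto_sum_range_one_div_nat_succ_atTop
  apply squeeze_zero' (Filter.eventually_atTop.mpr ⟨0, fun M _ => abs_nonneg _⟩)
    (Filter.eventually_atTop.mpr ⟨K, key⟩) hbound

lemma aux_T_tendsto (b : ℝ) (hb : 0 < b) (hbk : ∀ k : ℤ, b ≠ (k : ℝ)) :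
    Tendsto (fun M => ∑ p ∈ range M, Real.Gamma ((p : ℝ) - b) / (Real.Gamma (-b) * p.factorial))
      atTop (nhds 0) := by
  rw [← tendsto_add_atTop_iff_nat 1]
  have : (fun M => ∑ p ∈ range (M + 1), Real.Gamma ((p : ℝ) - b) / (Real.Gamma (-b) * p.factorial))
      = fun M => ∏ k ∈ range M, (1 - b / ((k : ℝ) + 1)) := by
    funext M; rw [aux_closed_s11 b hbk M, aux_prod b hbk M]
  rw [this]
  exact aux_limit b hb

lemma aux_summable (b : ℝ) (hb : 0 < b) (hbk : ∀ k : ℤ, b ≠ (k : ℝ)) :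
    Summable (fun p : ℕ => Real.Gamma ((p : ℝ) - b) / (Real.Gamma (-b) * p.factorial)) := by
  set f : ℕ → ℝ := fun p => Real.Gamma ((p : ℝ) - b) / (Real.Gamma (-b) * p.factorial) with hf
  obtain ⟨K, hK⟩ := exists_nat_gt b
  rw [← summable_nat_add_iff K]
  set g : ℕ → ℝ := fun q => Real.Gamma (((q + K : ℕ) : ℝ) - b) / ((q + K).factorial : ℝ) with hg
  have h0 : Real.Gamma (-b) ≠ 0 := by
    have := aux_gamma_ne b hbk 0 ⟨0, by simp⟩; simpa using this
  have hfg : ∀ q, f (q + K) = (Real.Gamma (-b))⁻¹ * g q := by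
    intro q; simp only [hf, hg]; field_simp
  have hgnn : ∀ q, 0 ≤ g q := by
    intro q
    apply div_nonneg _ (Nat.cast_nonneg _)
    apply le_of_lt
    apply Real.Gamma_pos_of_pos
    have : (K : ℝ) ≤ ((q + K : ℕ) : ℝ) := by push_cast; linarith [Nat.cast_nonneg (α := ℝ) q]
    linarith
  have hsum_eq : ∀ n, ∑ q ∈ range n, g q
      = Real.Gamma (-b) * ((∑ p ∈ range (n + K), f p) - ∑ p ∈ range K, f p) := by
    intro n
    have h1 : ∑ q ∈ range n, f (q + K) = (∑ p ∈ range (n + K), f p) - ∑ p ∈ range K, f p := by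
      rw [← Finset.sum_Ico_eq_sub _ (by omega : K ≤ n + K),
        Finset.sum_Ico_eq_sum_range]
      simp only [Nat.add_sub_cancel]
      exact Finset.sum_congr rfl fun q _ => by rw [add_comm]
    rw [← h1, Finset.mul_sum]
    exact Finset.sum_congr rfl fun q _ => by rw [hfg]; field_simp
  have hconv : Tendsto (fun n => ∑ q ∈ range n, g q) atTop
      (nhds (Real.Gamma (-b) * (0 - ∑ p ∈ range K, f p))) := by
    simp only [hsum_eq]
    apply Tendsto.const_mul
    apply Tendsto.sub_const
    exact (tendsto_add_atTop_iff_nat K).mpr (aux_T_tendsto b hb hbk)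
  have hmono : Monotone (fun n => ∑ q ∈ range n, g q) := by
    intro m n hmn
    exact Finset.sum_le_sum_of_subset_of_nonneg (Finset.range_subset_range.mpr hmn)
      (fun q _ _ => hgnn q)
  have hgsum : Summable g :=
    summable_of_sum_range_le hgnn (fun n => hmono.ge_of_tendsto hconv n)
  have : (fun q => f (q + K)) = fun q => (Real.Gamma (-b))⁻¹ * g q := funext hfg
  rw [this]
  exact hgsum.mul_left _

lemma aux_tail (b : ℝ) (hb : 0 < b) (hbk : ∀ k : ℤ, b ≠ (k : ℝ)) (M : ℕ) :
    ∑' q : ℕ, Real.Gamma (((M + 1 + q : ℕ) : ℝ) - b) / (Real.Gamma (-b) * (M + 1 + q).factorial)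
      = -∑ p ∈ range (M + 1), Real.Gamma ((p : ℝ) - b) / (Real.Gamma (-b) * p.factorial) := by
  set f : ℕ → ℝ := fun p => Real.Gamma ((p : ℝ) - b) / (Real.Gamma (-b) * p.factorial) with hf
  have hsf : Summable f := aux_summable b hb hbk
  have htsum : ∑' p, f p = 0 := by
    exact tendsto_nhds_unique hsf.hasSum.tendsto_sum_nat (aux_T_tendsto b hb hbk)
  have key := Summable.sum_add_tsum_nat_add (M + 1) hsf
  have : ∑' q : ℕ, f (M + 1 + q) = ∑' q : ℕ, f (q + (M + 1)) :=
    tsum_congr fun q => by rw [add_comm]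
  rw [show (∑' q : ℕ, Real.Gamma (((M + 1 + q : ℕ) : ℝ) - b) / (Real.Gamma (-b) * (M + 1 + q).factorial)) = ∑' q : ℕ, f (M + 1 + q) from rfl, this]
  linarith [key, htsum]

/-- Tail identity for the coefficient `A_i(α)` of the series decomposition of the left
Riemann–Liouville fractional integral: for `α>0` non-integer, integers `n ≥ 1`,
`0 ≤ i ≤ n−1` and `N ≥ n`,
`(1/Γ(α+i+1)) ∑_{p=N+1}^∞ Γ(p−α−n+1)/(Γ(−α−i)(p−n+1+i)!)
  = −(1/Γ(α+i+1)) ∑_{p=0}^{N−n+1+i} Γ(p−α−i)/(Γ(−α−i) p!)`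
(the infinite tail is reindexed by `p = N+1+q`, `q ∈ ℕ`). -/
theorem stmt11 (α : ℝ) (n i N : ℕ) (hα : 0 < α) (hα' : ∀ k : ℤ, α ≠ (k : ℝ))
    (hn : 1 ≤ n) (hi : i ≤ n - 1) (hN : n ≤ N) :
    (1 / Real.Gamma (α + (i : ℝ) + 1)) *
        ∑' q : ℕ,
          Real.Gamma (((N : ℝ) + 1 + (q : ℝ)) - α - (n : ℝ) + 1) /
            (Real.Gamma (-α - (i : ℝ)) * (Nat.factorial (N + 2 + q + i - n) : ℝ))
      = -(1 / Real.Gamma (α + (i : ℝ) + 1)) *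
          ∑ p ∈ Finset.range (N + i + 2 - n),
            Real.Gamma ((p : ℝ) - α - (i : ℝ)) /
              (Real.Gamma (-α - (i : ℝ)) * (Nat.factorial p : ℝ)) := by
  set b : ℝ := α + i with hbdef
  have hb : 0 < b := by positivity
  have hbk : ∀ k : ℤ, b ≠ (k : ℝ) := by
    intro k h
    exact hα' (k - i) (by push_cast; linarith)
  set M : ℕ := N + 1 + i - n with hM
  have hMr : (M : ℝ) = (N : ℝ) + 1 + i - n := by
    rw [hM]
    push_cast [Nat.cast_sub (by omega : n ≤ N + 1 + i)]
    ring
  have h1 : ∀ q : ℕ,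
      Real.Gamma (((N : ℝ) + 1 + (q : ℝ)) - α - (n : ℝ) + 1) /
        (Real.Gamma (-α - (i : ℝ)) * (Nat.factorial (N + 2 + q + i - n) : ℝ))
      = Real.Gamma (((M + 1 + q : ℕ) : ℝ) - b) / (Real.Gamma (-b) * (M + 1 + q).factorial) := by
    intro q
    have e1 : N + 2 + q + i - n = M + 1 + q := by omega
    have e2 : ((M + 1 + q : ℕ) : ℝ) - b = ((N : ℝ) + 1 + (q : ℝ)) - α - (n : ℝ) + 1 := by
      push_cast [hMr, hbdef]; ring
    have e3 : -b = -α - (i : ℝ) := by rw [hbdef]; ring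
    rw [e1, e2, e3]
  have h2 : N + i + 2 - n = M + 1 := by omega
  rw [tsum_congr h1, aux_tail b hb hbk M, h2]
  have h3 : ∀ p : ℕ, Real.Gamma ((p : ℝ) - α - (i : ℝ)) /
      (Real.Gamma (-α - (i : ℝ)) * (Nat.factorial p : ℝ))
      = Real.Gamma ((p : ℝ) - b) / (Real.Gamma (-b) * p.factorial) := by
    intro p
    rw [show (p : ℝ) - α - (i : ℝ) = (p : ℝ) - b by rw [hbdef]; ring,
      show -α - (i : ℝ) = -b by rw [hbdef]; ring]
  rw [Finset.sum_congr rfl fun p _ => h3 p]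
  ring
end

section
/- Let α>0 be a non-integer real number, let n∈ℕ, let 0<a<b and let x:[a,b]→ℝ be of class C^{n+1}. Define x_{0,0}=x and x_{k+1,0}(t)=t·(d/dt)x_{k,0}(t) for k≥0. Then for every t∈(a,b], _a𝓘_t^α x(t) = ∑_{i=0}^n A_i(α)·(ln(t/a))^{α+i}·x_{i,0}(t) + ∑_{p=n+1}^∞ B(α,p)·(ln(t/a))^{α+n−p}·V_p(t), where A_i(α) = (1/Γ(α+i+1))·[1 + ∑_{p=n−i+1}^∞ Γ(p−α−n)/(Γ(−α−i)·(p−n+i)!)], B(α,p) = Γ(p−α−n)/(Γ(α)·Γ(1−α)·(p−n)!), and V_p(t) = ∫_a^t (p−n)·(ln(τ/a))^{p−n−1}·x(τ)/τ dτ, the series being convergent. -/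
/-- Left Hadamard fractional integral of order `α`:
`_a𝓘_t^α x(t) = (1/Γ(α)) ∫_a^t (ln(t/τ))^{α−1} · x(τ)/τ dτ`. -/
noncomputable def hadIntLeft (a α : ℝ) (x : ℝ → ℝ) (t : ℝ) : ℝ :=
  (1 / Real.Gamma α) * ∫ τ in a..t, Real.log (t / τ) ^ (α - 1) * x τ / τ

/-- The sequence `x_{k,0}`: `x_{0,0} = x`, `x_{k+1,0}(t) = t · (d/dt) x_{k,0}(t)`. -/
noncomputable def xSeq0 (x : ℝ → ℝ) : ℕ → ℝ → ℝ
  | 0 => x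
  | (k + 1) => fun t => t * deriv (xSeq0 x k) t

open Finset Filter Topology Set MeasureTheory

/-- Generalized binomial coefficient `C(β, k)`. -/
noncomputable def gb (β : ℝ) (k : ℕ) : ℝ :=
  (∏ j ∈ Finset.range k, (β - j)) / (Nat.factorial k)


open Finset Filter

/-- Generalized binomial coefficient. -/

lemma gb_zero (β : ℝ) : gb β 0 = 1 := by simp [gb]

lemma gb_succ (β : ℝ) (k : ℕ) : gb β (k + 1) = gb β k * ((β - k) / (k + 1)) := by
  rw [gb, gb, div_mul_div_comm, Finset.prod_range_succ]
  congr 1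
  rw [Nat.factorial_succ]; push_cast; ring

lemma gb_pascal (β : ℝ) (k : ℕ) :
    gb β (k + 1) = gb (β - 1) (k + 1) + gb (β - 1) k := by
  have hshift : ∏ j ∈ range (k+1), (β - j) = (∏ j ∈ range k, (β - 1 - j)) * β := by
    rw [Finset.prod_range_succ']
    congr 1
    · exact Finset.prod_congr rfl fun j _ => by push_cast; ring
    · simp
  have h1 : ((k+1).factorial : ℝ) = ((k:ℝ)+1) * k.factorial := by
    rw [Nat.factorial_succ]; push_cast; ring
  have h2 : (k.factorial : ℝ) ≠ 0 := Nat.cast_ne_zero.mpr k.factorial_ne_zero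
  have h3 : ((k:ℝ) + 1) ≠ 0 := by positivity
  rw [gb, gb, gb, hshift, Finset.prod_range_succ, h1]
  rw [div_add_div _ _ (by exact mul_ne_zero h3 h2) h2]
  rw [div_eq_div_iff (mul_ne_zero h3 h2) (by exact mul_ne_zero (mul_ne_zero h3 h2) h2)]
  ring


lemma gb_mul_succ (β : ℝ) (k : ℕ) : gb β (k+1) * ((k:ℝ)+1) = β * gb (β - 1) k := by
  have hshift : ∏ j ∈ range (k+1), (β - j) = (∏ j ∈ range k, (β - 1 - j)) * β := by
    rw [Finset.prod_range_succ']
    congr 1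
    · exact Finset.prod_congr rfl fun j _ => by push_cast; ring
    · simp
  have h2 : (k.factorial : ℝ) ≠ 0 := Nat.cast_ne_zero.mpr k.factorial_ne_zero
  have h3 : ((k:ℝ) + 1) ≠ 0 := by positivity
  rw [gb, gb, hshift]
  rw [show (((k+1).factorial : ℕ):ℝ) = ((k:ℝ)+1) * k.factorial by rw [Nat.factorial_succ]; push_cast; ring]
  field_simp



lemma summable_gb_mul_pow (β : ℝ) {v : ℝ} (hv0 : 0 ≤ v) (hv1 : v < 1) :
    Summable (fun k : ℕ => |gb β k| * (k + 1) * v ^ k) := by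
  rcases eq_or_lt_of_le hv0 with h0 | h0
  · apply summable_of_ne_finset_zero (s := ({0} : Finset ℕ))
    intro k hk
    simp only [Finset.mem_singleton] at hk
    simp [← h0, zero_pow hk]
  · set r : ℝ := (1 + v) / 2 with hr
    have hrv : v < r := by rw [hr]; linarith
    have hr1 : r < 1 := by rw [hr]; linarith
    apply summable_of_ratio_norm_eventually_le hr1
    have htends : Tendsto (fun k : ℕ =>
        ((1 : ℝ) - (β + 1) * (1 / (k + 1))) * (1 + 1 / (k + 1)) * v) atTop (𝓝 v) := by
      have h1 : Tendsto (fun k : ℕ => (1 : ℝ) / (k + 1)) atTop (𝓝 0) :=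
        tendsto_one_div_add_atTop_nhds_zero_nat
      have := (((tendsto_const_nhds (x := (1:ℝ))).sub
          ((tendsto_const_nhds (x := β + 1)).mul h1)).mul
          ((tendsto_const_nhds (x := (1:ℝ))).add h1)).mul
          (tendsto_const_nhds (x := v))
      simpa using this
    have hev : ∀ᶠ k : ℕ in atTop,
        ((1 : ℝ) - (β + 1) * (1 / (k + 1))) * (1 + 1 / (k + 1)) * v < r :=
      htends.eventually (eventually_lt_nhds hrv)
    filter_upwards [hev, eventually_ge_atTop ⌈β⌉₊] with k hk hk2
    have hkβ : β ≤ (k : ℝ) := by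
      have := Nat.ceil_le.mp hk2
      exact_mod_cast this
    have hk1 : ((k : ℝ) + 1) ≠ 0 := by positivity
    have hA : (0 : ℝ) ≤ |gb β k| * (k + 1) * v ^ k := by positivity
    have habs : |gb β (k+1)| = |gb β k| * (((k : ℝ) - β) / ((k:ℝ)+1)) := by
      rw [gb_succ, abs_mul]
      congr 1
      rw [abs_div, abs_of_nonpos (by linarith : β - (k:ℝ) ≤ 0),
        abs_of_nonneg (by positivity : (0:ℝ) ≤ (k:ℝ)+1)]
      ring
    have key : |gb β (k+1)| * ((k:ℕ) + 1 + 1) * v ^ (k+1)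
        = (|gb β k| * (k + 1) * v ^ k) *
          (((1 : ℝ) - (β + 1) * (1 / (k + 1))) * (1 + 1 / (k + 1)) * v) := by
      rw [habs]
      field_simp
      ring
    have hnn1 : (0:ℝ) ≤ |gb β (k+1)| * ((k:ℕ) + 1 + 1) * v ^ (k+1) := by positivity
    rw [Real.norm_of_nonneg hA, Real.norm_of_nonneg (by positivity)]
    calc |gb β (k+1)| * ((↑(k+1) : ℝ) + 1) * v ^ (k+1)
        = (|gb β k| * (k + 1) * v ^ k) *
          (((1 : ℝ) - (β + 1) * (1 / (k + 1))) * (1 + 1 / (k + 1)) * v) := by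
          rw [← key]; push_cast; ring
      _ ≤ (|gb β k| * (k + 1) * v ^ k) * r := mul_le_mul_of_nonneg_left hk.le hA
      _ = r * (|gb β k| * (k + 1) * v ^ k) := by ring



lemma iter_deriv_one_sub_rpow (β d : ℝ) (hd0 : 0 < d) (hd1 : d < 1) :
    ∀ k : ℕ, ∀ v ∈ Set.Icc (0:ℝ) d,
      iteratedDerivWithin k (fun w => (1 - w) ^ β) (Set.Icc (0:ℝ) d) v
        = (∏ j ∈ range k, (β - j)) * (-1 : ℝ) ^ k * (1 - v) ^ (β - k) := by
  intro k
  induction k with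
  | zero =>
    intro v hv
    simp
  | succ k ih =>
    intro v hv
    have hUD : UniqueDiffOn ℝ (Set.Icc (0:ℝ) d) := uniqueDiffOn_Icc hd0
    rw [iteratedDerivWithin_succ]
    rw [derivWithin_congr (fun w hw => ih w hw) (ih v hv)]
    have h1v : (0:ℝ) < 1 - v := by
      have := hv.2; simp only [Set.mem_Icc] at hv; linarith [hv.2]
    have hder : HasDerivAt
        (fun w : ℝ => (∏ j ∈ range k, (β - j)) * (-1 : ℝ) ^ k * (1 - w) ^ (β - (k:ℝ)))
        ((∏ j ∈ range k, (β - j)) * (-1 : ℝ) ^ k *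
          (-1 * (β - (k:ℝ)) * (1 - v) ^ (β - (k:ℝ) - 1))) v := by
      exact (((hasDerivAt_id v).const_sub 1).rpow_const (Or.inl h1v.ne')).const_mul _
    rw [hder.hasDerivWithinAt.derivWithin (hUD v hv)]
    rw [Finset.prod_range_succ]
    rw [show β - ((k:ℕ)+1:ℕ) = β - (k:ℝ) - 1 by push_cast; ring]
    ring

lemma hasSum_binomial (β : ℝ) {u : ℝ} (hu1 : -1 < u) (hu0 : u ≤ 0) :
    HasSum (fun k : ℕ => gb β k * u ^ k) ((1 + u) ^ β) := by
  rcases eq_or_lt_of_le hu0 with h0 | h0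
  · -- u = 0
    subst h0
    have : HasSum (fun k : ℕ => gb β k * (0:ℝ) ^ k) (gb β 0 * (0:ℝ) ^ 0) :=
      hasSum_single 0 (fun k hk => by simp [zero_pow hk])
    simpa [gb_zero] using this
  · set d : ℝ := -u with hd
    have hd0 : 0 < d := by simp [hd]; linarith
    have hd1 : d < 1 := by simp [hd]; linarith
    set g : ℝ → ℝ := fun w => (1 - w) ^ β with hg
    -- summability
    have habs : Summable (fun k : ℕ => |gb β k * u ^ k|) := by
      apply Summable.of_nonneg_of_le (fun k => abs_nonneg _)
        (fun k => ?_) (summable_gb_mul_pow β hd0.le hd1)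
      have heq : |gb β k * u ^ k| = |gb β k| * d ^ k := by
        rw [abs_mul, abs_pow, abs_of_nonpos hu0, hd]
      rw [heq]
      have h1 : |gb β k| * 1 * d ^ k ≤ |gb β k| * (k+1) * d ^ k := by
        apply mul_le_mul_of_nonneg_right _ (by positivity)
        apply mul_le_mul_of_nonneg_left _ (abs_nonneg _)
        push_cast; linarith [Nat.cast_nonneg (α := ℝ) k]
      linarith [h1]
    have hsum : Summable (fun k : ℕ => gb β k * u ^ k) := habs.of_abs
    -- Taylor expansion facts
    have hform := iter_deriv_one_sub_rpow β d hd0 hd1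
    have hcd : ContDiffOn ℝ (⊤ : ℕ∞) g (Set.Icc 0 d) := by
      apply ContDiffOn.rpow_const_of_ne (contDiff_const.sub contDiff_id).contDiffOn
      intro w hw
      simp only [Set.mem_Icc] at hw
      have : (0:ℝ) < 1 - w := by linarith [hw.2]
      exact this.ne'
    -- Taylor polynomial equals partial sum of the binomial series
    have hpoly : ∀ n : ℕ, taylorWithinEval g n (Set.Icc 0 d) 0 d
        = ∑ k ∈ range (n+1), gb β k * u ^ k := by
      intro n
      rw [taylor_within_apply]
      apply Finset.sum_congr rfl
      intro k hk
      rw [hform k 0 (by constructor <;> [rfl; exact hd0.le])]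
      simp only [sub_zero, Real.one_rpow, smul_eq_mul]
      rw [gb]
      rw [show u = -d by rw [hd]; ring, neg_pow]
      ring_nf
      rw [show k*2 = 2*k from mul_comm k 2, pow_mul]
      norm_num
      have hdk : d^k * (-1:ℝ)^k = u^k := by rw [← mul_pow, hd]; ring
      rw [mul_assoc _ (d^k), hdk]; ring
    -- Cauchy remainder estimate
    set Cd : ℝ := (1 - d) ^ (β - 1) + 1 with hCd
    have hCd1 : (0:ℝ) ≤ (1 - d) ^ (β - 1) := Real.rpow_nonneg (by linarith) _
    have hrem : ∀ n : ℕ, |g d - taylorWithinEval g n (Set.Icc 0 d) 0 d|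
        ≤ Cd * (|gb β (n+1)| * (((n+1):ℕ) + 1) * d ^ (n+1)) := by
      intro n
      have hdiff' : DifferentiableOn ℝ
          (fun v => (∏ j ∈ range n, (β - j)) * (-1:ℝ)^n * (1 - v) ^ (β - (n:ℝ)))
          (Set.Ioo 0 d) := by
        intro v hv
        have h1v : (0:ℝ) < 1 - v := by
          simp only [Set.mem_Ioo] at hv; linarith [hv.2]
        exact ((((hasDerivAt_id v).const_sub 1).rpow_const
          (Or.inl h1v.ne')).const_mul _).differentiableAt.differentiableWithinAt
      have hdiff : DifferentiableOn ℝ (iteratedDerivWithin n g (Set.Icc 0 d)) (Set.Ioo 0 d) :=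
        hdiff'.congr (fun v hv => hform n v (Set.Ioo_subset_Icc_self hv))
      have hI : Set.uIcc 0 d = Set.Icc 0 d := Set.uIcc_of_le hd0.le
      have hO : Set.uIoo 0 d = Set.Ioo 0 d := Set.uIoo_of_le hd0.le
      have hcdn : ContDiffOn ℝ n g (Set.uIcc 0 d) := by
        rw [hI]; exact hcd.of_le (by exact_mod_cast (le_top : (n:ℕ∞) ≤ ⊤))
      obtain ⟨c, hc, hce⟩ := taylor_mean_remainder_cauchy hd0.ne hcdn (by rw [hI, hO]; exact hdiff)
      rw [hI] at hce
      rw [hO] at hc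
      rw [hform (n+1) c (Set.Ioo_subset_Icc_self hc)] at hce
      simp only [Set.mem_Ioo] at hc
      have h1c : (0:ℝ) < 1 - c := by linarith [hc.2]
      set P : ℝ := ∏ j ∈ range (n+1), (β - j) with hP
      set e : ℝ := β - ((n+1:ℕ):ℝ) with he
      have h1 : |g d - taylorWithinEval g n (Set.Icc 0 d) 0 d|
          = |P| * ((1-c) ^ e * (d-c)^n) * (d / n.factorial) := by
        rw [hce, sub_zero]
        rw [abs_mul, abs_div, abs_mul, abs_mul, abs_pow, abs_mul, abs_pow]
        rw [abs_of_nonneg (Real.rpow_nonneg h1c.le _),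
          abs_of_nonneg (by linarith [hc.2] : (0:ℝ) ≤ d - c),
          abs_of_nonneg hd0.le,
          abs_of_nonneg (by positivity : (0:ℝ) ≤ ((n.factorial : ℕ):ℝ))]
        simp only [abs_neg, abs_one, one_pow]
        ring
      have key1 : d - c ≤ d * (1 - c) := by nlinarith [hc.1, hd1]
      have key2 : (d-c)^n ≤ (d*(1-c))^n :=
        pow_le_pow_left₀ (by linarith [hc.2]) key1 n
      have hCdb : (1-c) ^ (β - 1) ≤ Cd := by
        rcases le_total (β - 1) 0 with hb | hb
        · have : (1-c) ^ (β-1) ≤ (1-d) ^ (β-1) :=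
            Real.rpow_le_rpow_of_nonpos (by linarith) (by linarith [hc.2]) hb
          linarith
        · have : (1-c) ^ (β-1) ≤ 1 :=
            Real.rpow_le_one h1c.le (by linarith [hc.1]) hb
          linarith
      have hIN : (1-c) ^ e * (d-c)^n ≤ d^n * Cd := by
        calc (1-c) ^ e * (d-c)^n ≤ (1-c) ^ e * (d*(1-c))^n :=
              mul_le_mul_of_nonneg_left key2 (Real.rpow_nonneg h1c.le _)
          _ = d^n * ((1-c) ^ e * (1-c)^n) := by rw [mul_pow]; ring
          _ = d^n * (1-c) ^ (β - 1) := by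
              rw [← Real.rpow_natCast (1-c) n, ← Real.rpow_add h1c]
              congr 1
              rw [he]; push_cast; ring
          _ ≤ d^n * Cd := mul_le_mul_of_nonneg_left hCdb (by positivity)
      have hPgb : |P| = |gb β (n+1)| * ((n+1).factorial : ℝ) := by
        have hfac : ((n+1).factorial : ℝ) ≠ 0 :=
          Nat.cast_ne_zero.mpr (n+1).factorial_ne_zero
        rw [gb, abs_div, Nat.abs_cast]
        field_simp
        rw [hP]
      rw [h1]
      calc |P| * ((1-c) ^ e * (d-c)^n) * (d / n.factorial)
          ≤ |P| * (d^n * Cd) * (d / n.factorial) := by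
            apply mul_le_mul_of_nonneg_right _ (by positivity)
            exact mul_le_mul_of_nonneg_left hIN (abs_nonneg _)
        _ = Cd * (|gb β (n+1)| * (((n:ℝ)) + 1) * d ^ (n+1)) := by
            rw [hPgb, Nat.factorial_succ]
            have hfn : ((n.factorial : ℕ):ℝ) ≠ 0 :=
              Nat.cast_ne_zero.mpr n.factorial_ne_zero
            push_cast
            field_simp
            ring
        _ ≤ Cd * (|gb β (n+1)| * ((((n+1):ℕ):ℝ) + 1) * d ^ (n+1)) := by
            apply mul_le_mul_of_nonneg_left _ (by positivity)
            apply mul_le_mul_of_nonneg_right _ (by positivity)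
            apply mul_le_mul_of_nonneg_left _ (abs_nonneg _)
            push_cast; linarith
    -- convergence of Taylor polynomials
    have hmaj : Tendsto (fun n : ℕ => Cd * (|gb β (n+1)| * (((n+1):ℕ) + 1) * d ^ (n+1)))
        atTop (𝓝 0) := by
      have h2 := ((summable_gb_mul_pow β hd0.le hd1).tendsto_atTop_zero).comp
        (tendsto_add_atTop_nat 1)
      have h3 := h2.const_mul Cd
      simpa using h3
    have hzero : Tendsto (fun n : ℕ => g d - taylorWithinEval g n (Set.Icc 0 d) 0 d)
        atTop (𝓝 0) :=
      squeeze_zero_norm (fun n => by simpa [Real.norm_eq_abs] using hrem n) hmaj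
    have hT : Tendsto (fun n : ℕ => taylorWithinEval g n (Set.Icc 0 d) 0 d)
        atTop (𝓝 (g d)) := by
      have := tendsto_const_nhds (x := g d) (f := atTop (α := ℕ)) |>.sub hzero
      simpa using this
    have hps : Tendsto (fun n : ℕ => ∑ k ∈ range (n+1), gb β k * u ^ k) atTop (𝓝 (g d)) :=
      hT.congr hpoly
    have hps2 : Tendsto (fun n : ℕ => ∑ k ∈ range (n+1), gb β k * u ^ k) atTop
        (𝓝 (∑' k, gb β k * u ^ k)) :=
      hsum.hasSum.tendsto_sum_nat.comp (tendsto_add_atTop_nat 1)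
    have htsum : (∑' k, gb β k * u ^ k) = g d := tendsto_nhds_unique hps2 hps
    have hgd : g d = (1 + u) ^ β := by
      rw [hg]
      norm_num [hd]
    have := hsum.hasSum
    rwa [htsum, hgd] at this



lemma gb_partial_sum (β : ℝ) (m : ℕ) :
    ∑ k ∈ range (m+1), (-1 : ℝ)^k * gb β k = (-1 : ℝ)^m * gb (β-1) m := by
  induction m with
  | zero => simp [gb_zero]
  | succ m ih =>
    rw [Finset.sum_range_succ, ih, gb_pascal]
    ring

lemma gb_sub_one_bound {β : ℝ} (hβ : 0 < β) :
    ∃ K : ℝ, 0 ≤ K ∧ ∀ m : ℕ, |gb (β-1) m| ≤ K := by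
  set m0 := ⌈β⌉₊ with hm0
  have hmono : ∀ m : ℕ, m0 ≤ m → |gb (β-1) (m+1)| ≤ |gb (β-1) m| := by
    intro m hm
    have hβm : β ≤ (m : ℝ) := by exact_mod_cast Nat.ceil_le.mp hm
    rw [gb_succ, abs_mul]
    have h1 : |(β - 1 - (m:ℝ)) / ((m:ℝ) + 1)| ≤ 1 := by
      rw [abs_div, abs_of_nonpos (by linarith : β - 1 - (m:ℝ) ≤ 0),
        abs_of_nonneg (by positivity : (0:ℝ) ≤ (m:ℝ)+1)]
      rw [div_le_one (by positivity)]
      linarith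
    calc |gb (β-1) m| * |(β - 1 - (m:ℝ)) / ((m:ℝ) + 1)| ≤ |gb (β-1) m| * 1 :=
          mul_le_mul_of_nonneg_left h1 (abs_nonneg _)
      _ = _ := mul_one _
  have hstep : ∀ p : ℕ, |gb (β-1) (m0 + p)| ≤ |gb (β-1) m0| := by
    intro p
    induction p with
    | zero => simp
    | succ p ih =>
      have := hmono (m0 + p) (Nat.le_add_right _ _)
      calc |gb (β-1) (m0 + (p+1))| = |gb (β-1) ((m0 + p) + 1)| := by ring_nf
        _ ≤ |gb (β-1) (m0 + p)| := this
        _ ≤ _ := ih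
  refine ⟨∑ j ∈ range (m0+1), |gb (β-1) j|, Finset.sum_nonneg fun j _ => abs_nonneg _, ?_⟩
  intro m
  rcases le_or_gt m m0 with hm | hm
  · exact Finset.single_le_sum (f := fun j => |gb (β-1) j|)
      (fun j _ => abs_nonneg _) (Finset.mem_range.mpr (Nat.lt_succ_of_le hm))
  · obtain ⟨p, rfl⟩ := Nat.exists_eq_add_of_le hm.le
    calc |gb (β-1) (m0 + p)| ≤ |gb (β-1) m0| := hstep p
      _ ≤ _ := Finset.single_le_sum (f := fun j => |gb (β-1) j|)
          (fun j _ => abs_nonneg _) (Finset.mem_range.mpr (Nat.lt_succ_of_le le_rfl))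

lemma summable_abs_gb {β : ℝ} (hβ : 0 < β) : Summable (fun k : ℕ => |gb β k|) := by
  obtain ⟨K, hK0, hK⟩ := gb_sub_one_bound hβ
  set m0 := ⌈β⌉₊ with hm0
  set u : ℕ → ℝ := fun k => (-1)^k * gb β k with hu
  have hTa : ∀ N : ℕ, |∑ k ∈ range N, u k| ≤ K := by
    intro N
    rcases N with _ | m
    · simpa using hK0
    · rw [hu]; rw [gb_partial_sum β m]
      rw [abs_mul, abs_pow, abs_neg, abs_one, one_pow, one_mul]
      exact hK m
  have hratio : ∀ k : ℕ, m0 ≤ k → u (k+1) = u k * (((k:ℝ) - β)/((k:ℝ)+1)) := by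
    intro k _
    rw [hu]
    simp only
    rw [gb_succ, pow_succ]
    ring
  have hfactor : ∀ k : ℕ, m0 ≤ k → 0 ≤ ((k:ℝ) - β)/((k:ℝ)+1) := by
    intro k hk
    have hβk : β ≤ (k : ℝ) := by exact_mod_cast Nat.ceil_le.mp hk
    apply div_nonneg (by linarith) (by positivity)
  -- sign dichotomy beyond m0
  have hdich : (∀ k : ℕ, m0 ≤ k → 0 ≤ u k) ∨ (∀ k : ℕ, m0 ≤ k → u k ≤ 0) := by
    rcases le_or_gt 0 (u m0) with h | h
    · left
      intro k hk
      obtain ⟨p, rfl⟩ := Nat.exists_eq_add_of_le hk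
      clear hk
      induction p with
      | zero => simpa using h
      | succ p ih =>
        have h1 := hratio (m0 + p) (Nat.le_add_right _ _)
        have h2 := hfactor (m0 + p) (Nat.le_add_right _ _)
        have : u ((m0 + p) + 1) = u (m0+p) * (((m0+p : ℕ):ℝ) - β)/(((m0+p:ℕ):ℝ)+1) := by
          rw [h1]; ring
        calc (0:ℝ) ≤ u (m0+p) * ((((m0+p : ℕ):ℝ) - β)/(((m0+p:ℕ):ℝ)+1)) :=
              mul_nonneg ih h2
          _ = u (m0 + (p+1)) := by rw [← Nat.add_assoc, h1]
    · right
      intro k hk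
      obtain ⟨p, rfl⟩ := Nat.exists_eq_add_of_le hk
      clear hk
      induction p with
      | zero => simpa using h.le
      | succ p ih =>
        have h1 := hratio (m0 + p) (Nat.le_add_right _ _)
        have h2 := hfactor (m0 + p) (Nat.le_add_right _ _)
        calc u (m0 + (p+1)) = u (m0+p) * ((((m0+p : ℕ):ℝ) - β)/(((m0+p:ℕ):ℝ)+1)) := by
              rw [← Nat.add_assoc, h1]
          _ ≤ 0 := mul_nonpos_of_nonpos_of_nonneg ih h2
  -- bounded partial sums
  have habsu : ∀ k : ℕ, |gb β k| = |u k| := by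
    intro k
    rw [hu]; simp only
    rw [abs_mul, abs_pow, abs_neg, abs_one, one_pow, one_mul]
  apply summable_of_sum_range_le (c := (∑ k ∈ range m0, |gb β k|) + 2*K)
    (fun n => abs_nonneg _)
  intro N
  rcases le_or_gt N m0 with hN | hN
  · have h1 : ∑ k ∈ range N, |gb β k| ≤ ∑ k ∈ range m0, |gb β k| :=
      Finset.sum_le_sum_of_subset_of_nonneg
        (Finset.range_subset_range.mpr hN) (fun j _ _ => abs_nonneg _)
    linarith
  · have hsplit : ∑ k ∈ range m0, |gb β k| + ∑ k ∈ Ico m0 N, |gb β k|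
        = ∑ k ∈ range N, |gb β k| := by
      simp only [Finset.range_eq_Ico]
      exact Finset.sum_Ico_consecutive (f := fun k => |gb β k|) (Nat.zero_le _) hN.le
    have hIco : ∑ k ∈ Ico m0 N, |gb β k| ≤ 2*K := by
      have hsub : ∑ k ∈ Ico m0 N, u k
          = (∑ k ∈ range N, u k) - (∑ k ∈ range m0, u k) :=
        Finset.sum_Ico_eq_sub _ hN.le
      rcases hdich with hpos | hneg
      · have heq : ∑ k ∈ Ico m0 N, |gb β k| = ∑ k ∈ Ico m0 N, u k := by
          apply Finset.sum_congr rfl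
          intro k hk
          rw [habsu k, abs_of_nonneg (hpos k (Finset.mem_Ico.mp hk).1)]
        rw [heq, hsub]
        have h1 := hTa N
        have h2 := hTa m0
        have := abs_sub_abs_le_abs_sub (∑ k ∈ range N, u k) (∑ k ∈ range m0, u k)
        calc (∑ k ∈ range N, u k) - (∑ k ∈ range m0, u k)
            ≤ |(∑ k ∈ range N, u k) - (∑ k ∈ range m0, u k)| := le_abs_self _
          _ ≤ |∑ k ∈ range N, u k| + |∑ k ∈ range m0, u k| := abs_sub _ _
          _ ≤ 2*K := by linarith
      · have heq : ∑ k ∈ Ico m0 N, |gb β k| = -∑ k ∈ Ico m0 N, u k := by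
          rw [← Finset.sum_neg_distrib]
          apply Finset.sum_congr rfl
          intro k hk
          rw [habsu k, abs_of_nonpos (hneg k (Finset.mem_Ico.mp hk).1)]
        rw [heq, hsub]
        have h1 := hTa N
        have h2 := hTa m0
        calc -((∑ k ∈ range N, u k) - (∑ k ∈ range m0, u k))
            ≤ |(∑ k ∈ range N, u k) - (∑ k ∈ range m0, u k)| := neg_le_abs _
          _ ≤ |∑ k ∈ range N, u k| + |∑ k ∈ range m0, u k| := abs_sub _ _
          _ ≤ 2*K := by linarith
    linarith [hsplit, hIco]

lemma hasSum_alt_gb_zero {β : ℝ} (hβ : 0 < β) :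
    HasSum (fun k : ℕ => (-1 : ℝ)^k * gb β k) 0 := by
  have habs : Summable (fun k : ℕ => |(-1:ℝ)^k * gb β k|) := by
    apply (summable_abs_gb hβ).congr
    intro k
    rw [abs_mul, abs_pow, abs_neg, abs_one, one_pow, one_mul]
  have hsum : Summable (fun k : ℕ => (-1:ℝ)^k * gb β k) := habs.of_abs
  set un : ℕ → ℝ := fun m => -1 + 1/((m:ℝ)+2) with hun
  have hu1 : ∀ m : ℕ, -1 < un m := by
    intro m
    have : (0:ℝ) < 1/((m:ℝ)+2) := by positivity
    rw [hun]; simp only; linarith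
  have hu0 : ∀ m : ℕ, un m ≤ 0 := by
    intro m
    have : (1:ℝ)/((m:ℝ)+2) ≤ 1 := by
      rw [div_le_one (by positivity)]; linarith [Nat.cast_nonneg (α := ℝ) m]
    rw [hun]; simp only; linarith
  have hS : ∀ m : ℕ, HasSum (fun k => gb β k * (un m)^k) ((1 + un m)^β) :=
    fun m => hasSum_binomial β (hu1 m) (hu0 m)
  have hmlim : Tendsto un atTop (𝓝 (-1)) := by
    have h1 : Tendsto (fun m : ℕ => (1:ℝ)/((m:ℝ)+2)) atTop (𝓝 0) := by
      have := (tendsto_one_div_add_atTop_nhds_zero_nat (𝕜 := ℝ)).comp (tendsto_add_atTop_nat 1)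
      apply this.congr
      intro m; simp only [Function.comp_apply]; push_cast; ring_nf
    have := (tendsto_const_nhds (x := (-1:ℝ)) (f := atTop (α := ℕ))).add h1
    simpa [hun, one_div] using this
  have htt : Tendsto (fun m : ℕ => ∑' k, gb β k * (un m)^k) atTop
      (𝓝 (∑' k, gb β k * (-1:ℝ)^k)) := by
    apply tendsto_tsum_of_dominated_convergence (bound := fun k => |gb β k|)
      (summable_abs_gb hβ)
    · intro k
      exact (hmlim.pow k).const_mul (gb β k)
    · apply Eventually.of_forall
      intro m k
      rw [Real.norm_eq_abs, abs_mul, abs_pow]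
      have h1 : |un m| ≤ 1 := by
        rw [abs_le]; constructor
        · linarith [hu1 m]
        · linarith [hu0 m]
      calc |gb β k| * |un m| ^ k ≤ |gb β k| * 1 ^ k := by
            apply mul_le_mul_of_nonneg_left (pow_le_pow_left₀ (abs_nonneg _) h1 k) (abs_nonneg _)
        _ = |gb β k| := by rw [one_pow, mul_one]
  have heq : ∀ m : ℕ, ∑' k, gb β k * (un m)^k = ((m:ℝ)+2) ^ (-β) := by
    intro m
    rw [(hS m).tsum_eq]
    rw [show (1 : ℝ) + un m = ((m:ℝ)+2)⁻¹ by rw [hun]; simp only; field_simp; ring]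
    rw [Real.inv_rpow (by positivity), ← Real.rpow_neg (by positivity)]
  have hzero : Tendsto (fun m : ℕ => ((m:ℝ)+2) ^ (-β)) atTop (𝓝 0) := by
    have h1 : Tendsto (fun x : ℝ => x ^ (-β)) atTop (𝓝 0) := tendsto_rpow_neg_atTop hβ
    have h2 : Tendsto (fun m : ℕ => ((m:ℝ)+2)) atTop atTop :=
      tendsto_atTop_add_const_right atTop 2 tendsto_natCast_atTop_atTop
    exact h1.comp h2
  have hlim0 : Tendsto (fun m : ℕ => ∑' k, gb β k * (un m)^k) atTop (𝓝 0) :=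
    hzero.congr (fun m => (heq m).symm)
  have h0 : ∑' k, gb β k * (-1:ℝ)^k = 0 := tendsto_nhds_unique htt hlim0
  have h0' : ∑' k, (-1:ℝ)^k * gb β k = 0 := by
    rw [← h0]
    exact tsum_congr (fun k => mul_comm _ _)
  have := hsum.hasSum
  rwa [h0'] at this



lemma Gamma_prod (z : ℝ) (m : ℕ) (h : ∀ j : ℕ, j < m → z + j ≠ 0) :
    Real.Gamma (z + m) = (∏ j ∈ range m, (z + j)) * Real.Gamma z := by
  induction m with
  | zero => simp
  | succ m ih =>
    have h1 : z + ((m+1 : ℕ):ℝ) = (z + m) + 1 := by push_cast; ring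
    rw [h1, Real.Gamma_add_one (h m (Nat.lt_succ_self m)),
      ih (fun j hj => h j (hj.trans (Nat.lt_succ_self m))), Finset.prod_range_succ]
    ring

lemma gamma_term_eq (α : ℝ) (hα' : ∀ k : ℤ, α ≠ (k : ℝ)) (i q : ℕ) :
    Real.Gamma ((q:ℝ) + 1 - (i:ℝ) - α) / (Real.Gamma (-α - (i:ℝ)) * ((Nat.factorial (q+1)) : ℝ))
      = (-1:ℝ)^(q+1) * gb (α + i) (q+1) := by
  set z : ℝ := -α - i with hz
  have hzj : ∀ j : ℕ, z + j ≠ 0 := by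
    intro j hj
    apply hα' ((j : ℤ) - (i : ℤ))
    push_cast
    rw [hz] at hj
    linarith [hj]
  have hznm : ∀ m : ℕ, z ≠ -(m:ℝ) := by
    intro m hm
    apply hα' ((m : ℤ) - (i : ℤ))
    push_cast
    rw [hz] at hm
    linarith [hm]
  have hΓz : Real.Gamma z ≠ 0 := Real.Gamma_ne_zero hznm
  have harg : (q:ℝ) + 1 - (i:ℝ) - α = z + ((q+1 : ℕ):ℝ) := by rw [hz]; push_cast; ring
  rw [harg, Gamma_prod z (q+1) (fun j _ => hzj j)]
  have hprod : ∏ j ∈ range (q+1), (z + j) = (-1:ℝ)^(q+1) * ∏ j ∈ range (q+1), ((α + i) - j) := by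
    have h1 : ∀ j ∈ range (q+1), z + (j:ℝ) = (-1) * ((α + i) - j) := by
      intro j _
      rw [hz]; ring
    rw [Finset.prod_congr rfl h1, Finset.prod_mul_distrib, Finset.prod_const,
      Finset.card_range]
  rw [hprod, gb]
  have hfac : ((Nat.factorial (q+1) : ℕ):ℝ) ≠ 0 := Nat.cast_ne_zero.mpr (Nat.factorial_ne_zero _)
  field_simp

lemma hasSum_shift {β : ℝ} (hβ : 0 < β) :
    HasSum (fun q : ℕ => (-1:ℝ)^(q+1) * gb β (q+1)) (-1) := by
  have h0 := hasSum_alt_gb_zero hβ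
  refine (hasSum_nat_add_iff (f := fun k => (-1:ℝ)^k * gb β k) 1).mpr ?_
  simpa [gb_zero] using h0

lemma summable_gamma_term (α : ℝ) (hα : 0 < α) (hα' : ∀ k : ℤ, α ≠ (k : ℝ)) (i : ℕ) :
    Summable (fun q : ℕ => Real.Gamma ((q:ℝ) + 1 - (i:ℝ) - α) /
      (Real.Gamma (-α - (i:ℝ)) * ((Nat.factorial (q+1)) : ℝ))) := by
  have hβ : 0 < α + (i:ℝ) := by positivity
  exact ((hasSum_shift hβ).summable).congr (fun q => (gamma_term_eq α hα' i q).symm)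

lemma bracket_zero (α : ℝ) (hα : 0 < α) (hα' : ∀ k : ℤ, α ≠ (k : ℝ)) (i : ℕ) :
    1 + ∑' q : ℕ, Real.Gamma ((q:ℝ) + 1 - (i:ℝ) - α) /
      (Real.Gamma (-α - (i:ℝ)) * ((Nat.factorial (q+1)) : ℝ)) = 0 := by
  have hβ : 0 < α + (i:ℝ) := by positivity
  have h1 : ∑' q : ℕ, Real.Gamma ((q:ℝ) + 1 - (i:ℝ) - α) /
      (Real.Gamma (-α - (i:ℝ)) * ((Nat.factorial (q+1)) : ℝ)) = -1 := by
    rw [tsum_congr (fun q => gamma_term_eq α hα' i q)]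
    exact (hasSum_shift hβ).tsum_eq
  rw [h1]; ring

lemma B_coeff_eq (α : ℝ) (hα' : ∀ k : ℤ, α ≠ (k : ℝ)) (q : ℕ) :
    Real.Gamma ((q:ℝ) + 1 - α) /
      (Real.Gamma α * Real.Gamma (1 - α) * ((Nat.factorial (q+1)) : ℝ))
      = (-1:ℝ)^q * gb α (q+1) / Real.Gamma (α + 1) := by
  have hα0 : α ≠ 0 := fun h => hα' 0 (by simpa using h)
  have hnegα : (-α : ℝ) ≠ 0 := by simpa using hα0
  have hΓnegα : Real.Gamma (-α) ≠ 0 := by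
    apply Real.Gamma_ne_zero
    intro m hm
    apply hα' (m : ℤ)
    push_cast
    linarith [hm]
  have hΓα : Real.Gamma α ≠ 0 := by
    apply Real.Gamma_ne_zero
    intro m hm
    apply hα' (-(m : ℤ))
    push_cast
    linarith [hm]
  have h1 : Real.Gamma (1 - α) = -α * Real.Gamma (-α) := by
    rw [show (1 - α : ℝ) = -α + 1 by ring, Real.Gamma_add_one hnegα]
  have h2 : Real.Gamma (α + 1) = α * Real.Gamma α := Real.Gamma_add_one hα0
  have h3 := gamma_term_eq α hα' 0 q
  simp only [Nat.cast_zero, sub_zero, add_zero] at h3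
  have hfac : ((Nat.factorial (q+1) : ℕ):ℝ) ≠ 0 := Nat.cast_ne_zero.mpr (Nat.factorial_ne_zero _)
  have h4 : Real.Gamma ((q:ℝ) + 1 - α)
      = (-1:ℝ)^(q+1) * gb α (q+1) * (Real.Gamma (-α) * ((Nat.factorial (q+1)) : ℝ)) := by
    field_simp at h3
    linarith [h3]
  rw [h4, h1, h2]
  field_simp
  ring

set_option maxHeartbeats 1000000 in
/-- Series decomposition of the left Hadamard fractional integral of a `C^{n+1}`
function: for `t ∈ (a,b]`,
`_a𝓘_t^α x(t) = ∑_{i=0}^n A_i(α)(ln(t/a))^{α+i}x_{i,0}(t)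
  + ∑_{p=n+1}^∞ B(α,p)(ln(t/a))^{α+n−p}V_p(t)`,
with `A_i(α) = (1/Γ(α+i+1))[1 + ∑_{p=n−i+1}^∞ Γ(p−α−n)/(Γ(−α−i)(p−n+i)!)]`,
`B(α,p) = Γ(p−α−n)/(Γ(α)Γ(1−α)(p−n)!)`,
`V_p(t) = ∫_a^t (p−n)(ln(τ/a))^{p−n−1}x(τ)/τ dτ`, the series (reindexed by
`p = q + n + 1`, resp. `p = q + (n−i+1)`) being convergent. -/
theorem stmt13 (α a b : ℝ) (n : ℕ) (hα : 0 < α) (hα' : ∀ k : ℤ, α ≠ (k : ℝ))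
    (ha : 0 < a) (hab : a < b)
    (x : ℝ → ℝ) (hx : ContDiffOn ℝ (n + 1) x (Set.Icc a b)) :
    ∀ t ∈ Set.Ioc a b,
      (∀ i : ℕ, i ≤ n →
        Summable (fun q : ℕ =>
          Real.Gamma ((q : ℝ) + 1 - (i : ℝ) - α) /
            (Real.Gamma (-α - (i : ℝ)) * (Nat.factorial (q + 1) : ℝ)))) ∧
      HasSum
        (fun q : ℕ =>
          (Real.Gamma ((q : ℝ) + 1 - α) /
              (Real.Gamma α * Real.Gamma (1 - α) * (Nat.factorial (q + 1) : ℝ)))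
            * Real.log (t / a) ^ (α - 1 - (q : ℝ))
            * ∫ τ in a..t, ((q : ℝ) + 1) * Real.log (τ / a) ^ q * x τ / τ)
        (hadIntLeft a α x t
          - ∑ i ∈ Finset.range (n + 1),
              ((1 / Real.Gamma (α + (i : ℝ) + 1)) *
                  (1 + ∑' q : ℕ,
                    Real.Gamma ((q : ℝ) + 1 - (i : ℝ) - α) /
                      (Real.Gamma (-α - (i : ℝ)) * (Nat.factorial (q + 1) : ℝ))))
                * Real.log (t / a) ^ (α + (i : ℝ)) * xSeq0 x i t) := by
  intro t ht
  obtain ⟨hat, htb⟩ := ht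
  have ht0 : 0 < t := lt_trans ha hat
  have hα0 : α ≠ 0 := fun h => hα' 0 (by simpa using h)
  have hΓα : Real.Gamma α ≠ 0 := by
    apply Real.Gamma_ne_zero
    intro m hm
    exact hα' (-(m:ℤ)) (by push_cast; linarith [hm])
  have hΓrec : Real.Gamma (α + 1) = α * Real.Gamma α := Real.Gamma_add_one hα0
  have hΓα1 : Real.Gamma (α + 1) ≠ 0 := by
    rw [hΓrec]; exact mul_ne_zero hα0 hΓα
  set L : ℝ := Real.log (t/a) with hLdef
  have hL : 0 < L := Real.log_pos ((one_lt_div ha).mpr hat)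
  refine ⟨fun i _ => summable_gamma_term α hα hα' i, ?_⟩
  have hsum0 : ∑ i ∈ Finset.range (n + 1),
      ((1 / Real.Gamma (α + (i : ℝ) + 1)) *
          (1 + ∑' q : ℕ,
            Real.Gamma ((q : ℝ) + 1 - (i : ℝ) - α) /
              (Real.Gamma (-α - (i : ℝ)) * (Nat.factorial (q + 1) : ℝ))))
        * L ^ (α + (i : ℝ)) * xSeq0 x i t = 0 := by
    apply Finset.sum_eq_zero
    intro i _
    rw [bracket_zero α hα hα' i]
    ring
  rw [hsum0, sub_zero]
  -- continuity and boundedness of x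
  have hxc : ContinuousOn x (Set.Icc a t) :=
    (hx.continuousOn).mono (Set.Icc_subset_Icc le_rfl htb)
  obtain ⟨M, hM⟩ := isCompact_Icc.exists_bound_of_continuousOn hxc
  have hM0 : 0 ≤ M := le_trans (norm_nonneg _) (hM a ⟨le_rfl, hat.le⟩)
  set cst : ℕ → ℝ :=
    fun q => (-1:ℝ)^q * gb α (q+1) / Real.Gamma (α+1) * L ^ (α - 1 - (q:ℝ)) with hcst
  set G : ℕ → ℝ → ℝ := fun q τ => ((q:ℝ)+1) * Real.log (τ/a) ^ q * x τ / τ with hG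
  set F : ℕ → ℝ → ℝ := fun q τ => cst q * G q τ with hF
  have hfun : (fun q : ℕ =>
      (Real.Gamma ((q : ℝ) + 1 - α) /
          (Real.Gamma α * Real.Gamma (1 - α) * (Nat.factorial (q + 1) : ℝ)))
        * L ^ (α - 1 - (q : ℝ))
        * ∫ τ in a..t, ((q : ℝ) + 1) * Real.log (τ / a) ^ q * x τ / τ)
      = fun q => ∫ τ in Set.Ioc a t, F q τ := by
    funext q
    rw [← intervalIntegral.integral_of_le hat.le]
    have h1 : (∫ τ in a..t, F q τ) = cst q * ∫ τ in a..t, G q τ :=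
      intervalIntegral.integral_const_mul _ _
    rw [h1, B_coeff_eq α hα' q, hcst]
  rw [hfun]
  -- continuity facts
  have hlogc : ContinuousOn (fun τ : ℝ => Real.log (τ/a)) (Set.Icc a t) := by
    apply ContinuousOn.log (continuousOn_id.div_const a)
    intro τ hτ
    exact (div_pos (lt_of_lt_of_le ha hτ.1) ha).ne'
  have hGc : ∀ q, ContinuousOn (G q) (Set.Icc a t) := by
    intro q
    apply ContinuousOn.div
    · exact (continuousOn_const.mul (hlogc.pow q)).mul hxc
    · exact continuousOn_id
    · intro τ hτ
      exact (lt_of_lt_of_le ha hτ.1).ne'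
  have hFint : ∀ q, MeasureTheory.IntegrableOn (F q) (Set.Ioc a t) := by
    intro q
    apply MeasureTheory.IntegrableOn.mono_set _ Set.Ioc_subset_Icc_self
    exact (continuousOn_const.mul (hGc q)).integrableOn_Icc
  -- FTC computation
  have hFTC : ∀ q : ℕ, (∫ τ in a..t, (((q:ℝ)+1) * Real.log (τ/a) ^ q / τ)) = L ^ (q+1) := by
    intro q
    have hder : ∀ τ ∈ Set.uIcc a t, HasDerivAt (fun s => Real.log (s/a) ^ (q+1))
        (((q:ℝ)+1) * Real.log (τ/a) ^ q / τ) τ := by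
      intro τ hτ
      rw [Set.uIcc_of_le hat.le] at hτ
      have hτ0 : 0 < τ := lt_of_lt_of_le ha hτ.1
      have h2 : HasDerivAt (fun s : ℝ => Real.log (s/a)) (1/τ) τ := by
        have h1 : HasDerivAt (fun s : ℝ => s / a) (1/a) τ := (hasDerivAt_id τ).div_const a
        have := h1.log (div_pos hτ0 ha).ne'
        convert this using 1
        field_simp
      have h3 := h2.fun_pow (q+1)
      refine h3.congr_deriv ?_
      push_cast
      ring
    have hcont : ContinuousOn (fun τ : ℝ => ((q:ℝ)+1) * Real.log (τ/a) ^ q / τ)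
        (Set.uIcc a t) := by
      rw [Set.uIcc_of_le hat.le]
      apply ContinuousOn.div (continuousOn_const.mul (hlogc.pow q)) continuousOn_id
      intro τ hτ
      exact (lt_of_lt_of_le ha hτ.1).ne'
    rw [intervalIntegral.integral_eq_sub_of_hasDerivAt hder hcont.intervalIntegrable]
    rw [div_self ha.ne', Real.log_one]
    rw [zero_pow (Nat.succ_ne_zero q)]
    rw [sub_zero]
  -- norm bound
  have hbound : ∀ q : ℕ, (∫ τ in Set.Ioc a t, ‖F q τ‖) ≤ |cst q| * M * L^(q+1) := by
    intro q
    have hHc : ContinuousOn (fun τ : ℝ => |cst q| * M * (((q:ℝ)+1) * Real.log (τ/a) ^ q / τ))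
        (Set.Icc a t) := by
      apply ContinuousOn.mul continuousOn_const
      apply ContinuousOn.div (continuousOn_const.mul (hlogc.pow q)) continuousOn_id
      intro τ hτ
      exact (lt_of_lt_of_le ha hτ.1).ne'
    have hHint : MeasureTheory.IntegrableOn
        (fun τ : ℝ => |cst q| * M * (((q:ℝ)+1) * Real.log (τ/a) ^ q / τ)) (Set.Ioc a t) :=
      MeasureTheory.IntegrableOn.mono_set hHc.integrableOn_Icc Set.Ioc_subset_Icc_self
    have hle : ∀ τ ∈ Set.Ioc a t,
        ‖F q τ‖ ≤ |cst q| * M * (((q:ℝ)+1) * Real.log (τ/a) ^ q / τ) := by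
      intro τ hτ
      have hτ0 : 0 < τ := lt_trans ha hτ.1
      have hl0 : 0 ≤ Real.log (τ/a) := Real.log_nonneg ((one_le_div ha).mpr hτ.1.le)
      have hxM : |x τ| ≤ M := hM τ ⟨hτ.1.le, hτ.2⟩
      have hGabs : |G q τ| = ((q:ℝ)+1) * Real.log (τ/a)^q * |x τ| / τ := by
        rw [show G q τ = ((q:ℝ)+1) * Real.log (τ/a) ^ q * x τ / τ from rfl]
        rw [abs_div, abs_mul, abs_mul,
          abs_of_nonneg (by positivity : (0:ℝ) ≤ (q:ℝ)+1),
          abs_of_nonneg (pow_nonneg hl0 q), abs_of_nonneg hτ0.le]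
      have hsplit : ‖F q τ‖ = |cst q| * |G q τ| := by
        rw [Real.norm_eq_abs, show F q τ = cst q * G q τ from rfl, abs_mul]
      rw [hsplit, hGabs]
      calc |cst q| * (((q:ℝ)+1) * Real.log (τ/a)^q * |x τ| / τ)
          ≤ |cst q| * (((q:ℝ)+1) * Real.log (τ/a)^q * M / τ) := by
            apply mul_le_mul_of_nonneg_left _ (abs_nonneg _)
            gcongr
          _ = |cst q| * M * (((q:ℝ)+1) * Real.log (τ/a) ^ q / τ) := by ring
    calc (∫ τ in Set.Ioc a t, ‖F q τ‖)
        ≤ ∫ τ in Set.Ioc a t, |cst q| * M * (((q:ℝ)+1) * Real.log (τ/a) ^ q / τ) :=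
          MeasureTheory.setIntegral_mono_on (hFint q).norm hHint measurableSet_Ioc hle
      _ = |cst q| * M * ∫ τ in Set.Ioc a t, (((q:ℝ)+1) * Real.log (τ/a) ^ q / τ) :=
          MeasureTheory.integral_const_mul _ _
      _ = |cst q| * M * L^(q+1) := by
          rw [← intervalIntegral.integral_of_le hat.le, hFTC q]
  -- summability of majorant
  have hmajsum : Summable (fun q : ℕ => |cst q| * M * L^(q+1)) := by
    have h1 : Summable (fun q : ℕ => |gb α (q+1)|) :=
      (summable_nat_add_iff 1).mpr (summable_abs_gb hα)
    have h2 : ∀ q : ℕ, |cst q| * M * L^(q+1)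
        = (M * L ^ α / |Real.Gamma (α+1)|) * |gb α (q+1)| := by
      intro q
      have h3 : L ^ (α - 1 - (q:ℝ)) * (L:ℝ)^(q+1) = L ^ α := by
        rw [← Real.rpow_natCast L (q+1), ← Real.rpow_add hL]
        congr 1
        push_cast
        ring
      rw [show cst q = (-1:ℝ)^q * gb α (q+1) / Real.Gamma (α+1) * L ^ (α - 1 - (q:ℝ)) from rfl]
      rw [abs_mul, abs_div, abs_mul, abs_pow, abs_neg, abs_one, one_pow, one_mul,
        abs_of_nonneg (Real.rpow_nonneg hL.le _)]
      rw [show |gb α (q+1)| / |Real.Gamma (α+1)| * L ^ (α - 1 - (q:ℝ)) * M * L^(q+1)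
          = (M * (L ^ (α - 1 - (q:ℝ)) * (L:ℝ)^(q+1)) / |Real.Gamma (α+1)|) * |gb α (q+1)| by ring,
        h3]
    exact ((h1.mul_left _).congr (fun q => (h2 q).symm))
  have hFnormsum : Summable (fun q : ℕ => ∫ τ in Set.Ioc a t, ‖F q τ‖) :=
    Summable.of_nonneg_of_le
      (fun q => MeasureTheory.integral_nonneg (fun τ => norm_nonneg _)) hbound hmajsum
  -- pointwise sum
  have hpt : ∀ τ ∈ Set.Ioo a t, HasSum (fun q => F q τ)
      ((1 / Real.Gamma α) * (Real.log (t/τ) ^ (α-1) * x τ / τ)) := by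
    intro τ hτo
    have hτa : a < τ := hτo.1
    have hτt : τ < t := hτo.2
    have hτ0 : 0 < τ := lt_trans ha hτa
    set l : ℝ := Real.log (τ/a) with hldef
    have hl0 : 0 < l := Real.log_pos ((one_lt_div ha).mpr hτa)
    have hlL : l < L := by
      rw [hldef, hLdef]
      exact Real.log_lt_log (by positivity) ((div_lt_div_iff_of_pos_right ha).mpr hτt)
    set u : ℝ := -(l / L) with hu
    have hu1 : -1 < u := by
      rw [hu]
      have : l / L < 1 := (div_lt_one hL).mpr hlL
      linarith
    have hu0 : u ≤ 0 := by
      rw [hu]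
      have : 0 ≤ l/L := by positivity
      linarith
    have hbin := hasSum_binomial (α - 1) hu1 hu0
    have hC := hbin.mul_left (L ^ (α-1) * x τ / (τ * Real.Gamma α))
    have hLk : ∀ k : ℕ, L ^ (α - 1 - (k:ℝ)) = L ^ (α-1) / L^k := by
      intro k
      rw [← Real.rpow_natCast L k, ← Real.rpow_sub hL]
    have hterm : ∀ k : ℕ, (L ^ (α-1) * x τ / (τ * Real.Gamma α)) * (gb (α-1) k * u ^ k)
        = F k τ := by
      intro k
      rw [show F k τ = cst k * G k τ from rfl,
        show cst k = (-1:ℝ)^k * gb α (k+1) / Real.Gamma (α+1) * L ^ (α - 1 - (k:ℝ)) from rfl,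
        show G k τ = ((k:ℝ)+1) * l ^ k * x τ / τ from rfl]
      rw [hLk k, hΓrec, hu]
      rw [show (-(l/L)) ^ k = (-1:ℝ)^k * l^k / L^k by rw [neg_div', neg_pow, div_pow]; ring]
      have hk1 : ((k:ℝ)+1) ≠ 0 := by positivity
      have hLkne : (L:ℝ)^k ≠ 0 := (pow_pos hL k).ne'
      have hgb' : gb α (k+1) = α * gb (α-1) k / ((k:ℝ)+1) := by
        rw [eq_div_iff hk1]
        exact gb_mul_succ α k
      rw [hgb']
      field_simp
    have hval : (L ^ (α-1) * x τ / (τ * Real.Gamma α)) * ((1+u) ^ (α-1))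
        = (1 / Real.Gamma α) * (Real.log (t/τ) ^ (α-1) * x τ / τ) := by
      have hlog : Real.log (t/τ) = L - l := by
        rw [hLdef, hldef, Real.log_div ht0.ne' hτ0.ne', Real.log_div ht0.ne' ha.ne',
          Real.log_div hτ0.ne' ha.ne']
        ring
      have h1u : 0 < 1 + u := by linarith [hu1]
      have hLu : L * (1+u) = L - l := by
        rw [hu]
        field_simp
        ring
      have h2 : Real.log (t/τ) ^ (α-1) = L^(α-1) * (1+u)^(α-1) := by
        rw [hlog, ← hLu, Real.mul_rpow hL.le h1u.le]
      rw [h2]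
      field_simp
    have hfin : HasSum (fun k => F k τ)
        ((L ^ (α-1) * x τ / (τ * Real.Gamma α)) * ((1+u) ^ (α-1))) := by
      have heqf : (fun k : ℕ => (L ^ (α-1) * x τ / (τ * Real.Gamma α)) * (gb (α-1) k * u ^ k))
          = fun k => F k τ := funext hterm
      rw [← heqf]
      exact hC
    rwa [hval] at hfin
  -- a.e. identification of the sum
  have hae : (fun τ => ∑' q, F q τ) =ᵐ[volume.restrict (Set.Ioc a t)]
      (fun τ => (1 / Real.Gamma α) * (Real.log (t/τ) ^ (α-1) * x τ / τ)) := by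
    have hne : ∀ᵐ τ : ℝ, τ ≠ t := by
      rw [MeasureTheory.ae_iff]
      have : {τ : ℝ | ¬ τ ≠ t} = {t} := by
        ext τ
        simp
      rw [this]
      exact Real.volume_singleton
    rw [Filter.EventuallyEq, MeasureTheory.ae_restrict_iff' measurableSet_Ioc]
    filter_upwards [hne] with τ hτne
    intro hmem
    exact (hpt τ ⟨hmem.1, lt_of_le_of_ne hmem.2 hτne⟩).tsum_eq
  -- conclude
  have hHS := MeasureTheory.hasSum_integral_of_summable_integral_norm
    (μ := MeasureTheory.volume.restrict (Set.Ioc a t)) (F := F) hFint hFnormsum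
  rw [MeasureTheory.integral_congr_ae hae, MeasureTheory.integral_const_mul,
    ← intervalIntegral.integral_of_le hat.le] at hHS
  simpa [hadIntLeft] using hHS
end
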